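/- arXiv:1407.1600 — 7 statements merged into one kernel-verified Lean document; each statement's English description precedes it below -/
import Mathlib

section
/- Let E : ℝ → ℝ be concave on the interval [0,1] and concave on the interval [1,2], with E(0) = 0 and E(2) ≤ 2·E(1). Then for every ε ∈ [0,1], E(1+ε) + E(1−ε) ≥ E(2). -/
/-- If `E : ℝ → ℝ` is concave on `[0,1]` and on `[1,2]`, with `E 0 = 0` and
`E 2 ≤ 2 * E 1`, then for every `ε ∈ [0,1]` one has `E (1+ε) + E (1-ε) ≥ E 2`. -/
theorem concave_no_binding_inequality
    (E : ℝ → ℝ)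
    (h01 : ConcaveOn ℝ (Set.Icc (0 : ℝ) 1) E)
    (h12 : ConcaveOn ℝ (Set.Icc (1 : ℝ) 2) E)
    (hE0 : E 0 = 0)
    (hE2 : E 2 ≤ 2 * E 1) :
    ∀ ε ∈ Set.Icc (0 : ℝ) 1, E 2 ≤ E (1 + ε) + E (1 - ε) := by
  intro ε hε
  obtain ⟨hε0, hε1⟩ := hε
  have hA := h01.2 (by norm_num : (1:ℝ) ∈ Set.Icc (0:ℝ) 1)
    (by norm_num : (0:ℝ) ∈ Set.Icc (0:ℝ) 1) (by linarith : (0:ℝ) ≤ 1 - ε) hε0 (by ring)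
  have hB := h12.2 (by norm_num : (1:ℝ) ∈ Set.Icc (1:ℝ) 2)
    (by norm_num : (2:ℝ) ∈ Set.Icc (1:ℝ) 2) (by linarith : (0:ℝ) ≤ 1 - ε) hε0 (by ring)
  simp only [smul_eq_mul] at hA hB
  have e1 : (1 - ε) * 1 + ε * 0 = 1 - ε := by ring
  have e2 : (1 - ε) * 1 + ε * 2 = 1 + ε := by ring
  rw [e1] at hA
  rw [e2] at hB
  nlinarith [mul_nonneg (by linarith : (0:ℝ) ≤ 1 - ε) (by linarith : 0 ≤ 2 * E 1 - E 2)]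
end

section
/- Let (X, μ) be a measure space and f, g ∈ L²(X, μ; ℂ) with ‖f‖_{L²} = ‖g‖_{L²} = 1 and ∫_X conj(f) g dμ = 0. Then for every measurable set S ⊆ X, | ∫_S conj(f) g dμ | ≤ 1/2. -/
open MeasureTheory

/-- If `f, g` are unit vectors of `L²(X, μ; ℂ)` that are orthogonal, then for every
measurable set `S` the partial inner product `∫_S conj f · g` has modulus at most `1/2`. -/
theorem abs_setIntegral_conj_mul_le_half
    {X : Type*} [MeasurableSpace X] (μ : Measure X) (f g : X → ℂ)
    (hf : MemLp f 2 μ) (hg : MemLp g 2 μ)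
    (hfnorm : ∫ x, ‖f x‖ ^ 2 ∂μ = 1) (hgnorm : ∫ x, ‖g x‖ ^ 2 ∂μ = 1)
    (horth : ∫ x, (starRingEnd ℂ) (f x) * g x ∂μ = 0)
    (S : Set X) (hS : MeasurableSet S) :
    ‖∫ x in S, (starRingEnd ℂ) (f x) * g x ∂μ‖ ≤ 1 / 2 := by
  have hconj : MemLp (fun x => (starRingEnd ℂ) (f x)) 2 μ := by
    refine ⟨RCLike.continuous_conj.comp_aestronglyMeasurable hf.1, ?_⟩
    calc eLpNorm (fun x => (starRingEnd ℂ) (f x)) 2 μ = eLpNorm f 2 μ := eLpNorm_conj f 2 μ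
    _ < ⊤ := hf.2
  have hint : Integrable (fun x => (starRingEnd ℂ) (f x) * g x) μ := by
    refine memLp_one_iff_integrable.mp ?_
    have := hconj.smul (r := 1) hg (hpqr := ⟨by simp [one_div, ENNReal.inv_two_add_inv_two]⟩)
    simpa [smul_eq_mul, Pi.mul_def, mul_comm] using this
  -- integrability of squared norms
  have hf2 : Integrable (fun x => ‖f x‖ ^ 2) μ := by
    have := hf.integrable_norm_rpow (by norm_num) (by norm_num)
    simpa [ENNReal.toReal_ofNat, Real.rpow_natCast] using this
  have hg2 : Integrable (fun x => ‖g x‖ ^ 2) μ := by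
    have := hg.integrable_norm_rpow (by norm_num) (by norm_num)
    simpa [ENNReal.toReal_ofNat, Real.rpow_natCast] using this
  -- Cauchy–Schwarz on a measurable set T
  have CS : ∀ T : Set X, ‖∫ x in T, (starRingEnd ℂ) (f x) * g x ∂μ‖ ≤
      Real.sqrt (∫ x in T, ‖f x‖ ^ 2 ∂μ) * Real.sqrt (∫ x in T, ‖g x‖ ^ 2 ∂μ) := by
    intro T
    have h1 : ‖∫ x in T, (starRingEnd ℂ) (f x) * g x ∂μ‖ ≤ ∫ x in T, ‖f x‖ * ‖g x‖ ∂μ := by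
      refine (norm_integral_le_integral_norm _).trans_eq ?_
      congr 1; ext x; simp [norm_mul]
    have h2 := integral_mul_norm_le_Lp_mul_Lq (μ := μ.restrict T) (p := 2) (q := 2)
      (f := f) (g := g) ⟨by norm_num, by norm_num, by norm_num⟩
      (by rw [show ENNReal.ofReal 2 = 2 by norm_num]; exact hf.restrict T)
      (by rw [show ENNReal.ofReal 2 = 2 by norm_num]; exact hg.restrict T)
    simp_rw [show ((2:ℝ)) = ((2:ℕ):ℝ) by norm_num, Real.rpow_natCast] at h2
    refine h1.trans (h2.trans_eq ?_)
    rw [Real.sqrt_eq_rpow, Real.sqrt_eq_rpow]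
    norm_num
  set I := ∫ x in S, (starRingEnd ℂ) (f x) * g x ∂μ with hI
  have hsplit : I + ∫ x in Sᶜ, (starRingEnd ℂ) (f x) * g x ∂μ = 0 := by
    rw [hI, integral_add_compl hS hint, horth]
  have hJ : ‖∫ x in Sᶜ, (starRingEnd ℂ) (f x) * g x ∂μ‖ = ‖I‖ := by
    have : ∫ x in Sᶜ, (starRingEnd ℂ) (f x) * g x ∂μ = -I := by linear_combination hsplit
    rw [this, norm_neg]
  set A := ∫ x in S, ‖f x‖ ^ 2 ∂μ with hA
  set B := ∫ x in S, ‖g x‖ ^ 2 ∂μ with hB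
  have hAc : (∫ x in Sᶜ, ‖f x‖ ^ 2 ∂μ) = 1 - A := by
    have := integral_add_compl hS hf2
    rw [hfnorm] at this; linarith [this]
  have hBc : (∫ x in Sᶜ, ‖g x‖ ^ 2 ∂μ) = 1 - B := by
    have := integral_add_compl hS hg2
    rw [hgnorm] at this; linarith [this]
  have hA0 : 0 ≤ A := integral_nonneg fun x => by positivity
  have hB0 : 0 ≤ B := integral_nonneg fun x => by positivity
  have hA1 : A ≤ 1 := by
    have : (0:ℝ) ≤ 1 - A := hAc ▸ integral_nonneg fun x => by positivity
    linarith
  have hB1 : B ≤ 1 := by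
    have : (0:ℝ) ≤ 1 - B := hBc ▸ integral_nonneg fun x => by positivity
    linarith
  have c1 : ‖I‖ ≤ Real.sqrt A * Real.sqrt B := CS S
  have c2 : ‖I‖ ≤ Real.sqrt (1 - A) * Real.sqrt (1 - B) := by
    have := CS Sᶜ
    rw [hJ, hAc, hBc] at this; exact this
  nlinarith [Real.sq_sqrt hA0, Real.sq_sqrt hB0, Real.sq_sqrt (by linarith : (0:ℝ) ≤ 1 - A),
    Real.sq_sqrt (by linarith : (0:ℝ) ≤ 1 - B), Real.sqrt_nonneg A, Real.sqrt_nonneg B,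
    Real.sqrt_nonneg (1 - A), Real.sqrt_nonneg (1 - B),
    sq_nonneg (Real.sqrt A - Real.sqrt B), sq_nonneg (Real.sqrt (1 - A) - Real.sqrt (1 - B)),
    norm_nonneg I]
end

section
/- Let f, g ∈ L²(ℝ³, ℂ) with ‖f‖_{L²} = ‖g‖_{L²} = 1 and ∫_{ℝ³} conj(f) g = 0, and let r > 0. Then ∬_{\{(x,y) : |x−y| < r\}} |f(x)g(y) − g(x)f(y)|² / |x−y| dx dy ≥ (1/r) · ( 2 ∬_{\{(x,y) : |x−y| < r\}} |f(x)|² |g(y)|² dx dy − 1 ). -/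
open MeasureTheory

noncomputable section

abbrev R3 : Type := EuclideanSpace ℝ (Fin 3)

private lemma norm_sub_sq_complex (u v : ℂ) :
    ‖u - v‖ ^ 2 = ‖u‖ ^ 2 + ‖v‖ ^ 2 - 2 * (u * (starRingEnd ℂ) v).re := by
  simp only [Complex.sq_norm]
  exact Complex.normSq_sub u v

/-- For orthonormal `f, g ∈ L²(ℝ³, ℂ)` and `r > 0`, the exchange-type integral of the
Slater kernel `f(x)g(y) − g(x)f(y)` over `{|x−y| < r}` is bounded from below by
`(1/r)·(2∬_{|x−y|<r} |f(x)|²|g(y)|² − 1)`. -/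
theorem slater_exchange_lower_bound
    (f g : R3 → ℂ) (hf : MemLp f 2) (hg : MemLp g 2)
    (hfnorm : ∫ x, ‖f x‖ ^ 2 = 1) (hgnorm : ∫ x, ‖g x‖ ^ 2 = 1)
    (horth : ∫ x, (starRingEnd ℂ) (f x) * g x = 0)
    (r : ℝ) (hr : 0 < r) :
    ENNReal.ofReal
        ((1 / r) *
          (2 * (∫ z in {z : R3 × R3 | ‖z.1 - z.2‖ < r}, ‖f z.1‖ ^ 2 * ‖g z.2‖ ^ 2) - 1))
      ≤ ∫⁻ z in {z : R3 × R3 | ‖z.1 - z.2‖ < r},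
          ENNReal.ofReal (‖f z.1 * g z.2 - g z.1 * f z.2‖ ^ 2 / ‖z.1 - z.2‖) := by
  classical
  set S : Set (R3 × R3) := {z : R3 × R3 | ‖z.1 - z.2‖ < r} with hSdef
  have hS : MeasurableSet S :=
    (isOpen_lt ((continuous_fst.sub continuous_snd).norm) continuous_const).measurableSet
  -- basic integrability
  have hF : Integrable (fun x : R3 => ‖f x‖ ^ 2) := (memLp_two_iff_integrable_sq_norm hf.1).mp hf
  have hG : Integrable (fun x : R3 => ‖g x‖ ^ 2) := (memLp_two_iff_integrable_sq_norm hg.1).mp hg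
  set A : R3 × R3 → ℝ := fun z => ‖f z.1‖ ^ 2 * ‖g z.2‖ ^ 2 with hAdef
  set B : R3 × R3 → ℝ := fun z => ‖g z.1‖ ^ 2 * ‖f z.2‖ ^ 2 with hBdef
  have hA : Integrable A := by rw [MeasureTheory.Measure.volume_eq_prod]; exact hF.mul_prod hG
  have hB : Integrable B := by rw [MeasureTheory.Measure.volume_eq_prod]; exact hG.mul_prod hF
  -- the cross function
  set h : R3 → ℂ := fun x => f x * (starRingEnd ℂ) (g x) with hhdef
  have hconjg : MemLp (fun x => (starRingEnd ℂ) (g x)) 2 :=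
    hg.of_le (Complex.continuous_conj.comp_aestronglyMeasurable hg.1)
      (Filter.Eventually.of_forall fun x => by simp)
  have hh : Integrable h := by
    have hmem : MemLp ((fun x => f x) • fun x => (starRingEnd ℂ) (g x)) 1 :=
      hconjg.smul (φ := fun x => f x) hf (hpqr := ⟨by simp [ENNReal.inv_two_add_inv_two]⟩)
    rw [← memLp_one_iff_integrable]
    simpa [hhdef, Pi.smul_apply', smul_eq_mul, Pi.mul_def] using hmem
  have hconjh : Integrable (fun x => (starRingEnd ℂ) (h x)) := by
    rw [← memLp_one_iff_integrable]
    exact (memLp_one_iff_integrable.mpr hh).of_le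
      (Complex.continuous_conj.comp_aestronglyMeasurable hh.1)
      (Filter.Eventually.of_forall fun x => by simp)
  set H : R3 × R3 → ℂ := fun z => h z.1 * (starRingEnd ℂ) (h z.2) with hHdef
  have hH : Integrable H := by rw [MeasureTheory.Measure.volume_eq_prod]; exact hh.mul_prod hconjh
  have hinth : ∫ x, h x = 0 := by
    have : ∫ x, h x = (starRingEnd ℂ) (∫ x, (starRingEnd ℂ) (f x) * g x) := by
      rw [← integral_conj]
      congr 1; funext x; simp [hhdef, mul_comm]
    rw [this, horth, map_zero]
  have hHint : ∫ z, H z = 0 := by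
    have h5 := integral_prod_mul (μ := (volume : Measure R3)) (ν := (volume : Measure R3))
      h (fun y => (starRingEnd ℂ) (h y))
    rw [hinth, zero_mul] at h5
    rw [MeasureTheory.Measure.volume_eq_prod]
    exact h5
  set C : R3 × R3 → ℝ := fun z => 2 * (H z).re with hCdef
  have hC : Integrable C := (hH.re).const_mul 2
  have hCfull : ∫ z, C z = 0 := by
    show ∫ z, 2 * (H z).re = 0
    rw [integral_const_mul]
    have h6 := integral_re hH
    simp only [RCLike.re_to_complex] at h6
    rw [h6, hHint, Complex.zero_re, mul_zero]
  -- membership of a, b in L² of the product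
  have hma : AEStronglyMeasurable (fun z : R3 × R3 => f z.1 * g z.2) volume := by
    rw [MeasureTheory.Measure.volume_eq_prod]; exact hf.1.comp_fst.mul hg.1.comp_snd
  have hmb : AEStronglyMeasurable (fun z : R3 × R3 => g z.1 * f z.2) volume := by
    rw [MeasureTheory.Measure.volume_eq_prod]; exact hg.1.comp_fst.mul hf.1.comp_snd
  have ha2 : MemLp (fun z : R3 × R3 => f z.1 * g z.2) 2 := by
    rw [memLp_two_iff_integrable_sq_norm hma]
    have : (fun z : R3 × R3 => ‖f z.1 * g z.2‖ ^ 2) = A := by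
      funext z; simp [hAdef, mul_pow]
    rw [this]; exact hA
  have hb2 : MemLp (fun z : R3 × R3 => g z.1 * f z.2) 2 := by
    rw [memLp_two_iff_integrable_sq_norm hmb]
    have : (fun z : R3 × R3 => ‖g z.1 * f z.2‖ ^ 2) = B := by
      funext z; simp [hBdef, mul_pow]
    rw [this]; exact hB
  set Q : R3 × R3 → ℝ := fun z => ‖f z.1 * g z.2 - g z.1 * f z.2‖ ^ 2 with hQdef
  have hQ : Integrable Q := by
    have := (memLp_two_iff_integrable_sq_norm (hma.sub hmb)).mp (ha2.sub hb2)
    simpa [hQdef] using this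
  -- pointwise expansion
  have hkey : ∀ z : R3 × R3, Q z = A z + B z - C z := by
    intro z
    have hab : (f z.1 * g z.2) * (starRingEnd ℂ) (g z.1 * f z.2) = H z := by
      simp only [hHdef, hhdef, map_mul, Complex.conj_conj]; ring
    rw [hQdef, hAdef, hBdef, hCdef]
    simp only
    rw [norm_sub_sq_complex, hab]
    simp [mul_pow]
  -- pointwise bound on C
  have hCbnd : ∀ z : R3 × R3, |C z| ≤ A z + B z := by
    intro z
    have h1 : |C z| ≤ 2 * (‖f z.1‖ * ‖g z.2‖) * (‖g z.1‖ * ‖f z.2‖) := by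
      rw [hCdef]
      simp only
      rw [abs_mul, abs_two]
      have : |(H z).re| ≤ ‖H z‖ := by
        exact Complex.abs_re_le_norm _
      have hnH : ‖H z‖ = (‖f z.1‖ * ‖g z.2‖) * (‖g z.1‖ * ‖f z.2‖) := by
        simp only [hHdef, hhdef, norm_mul, RingHomIsometric.norm_map]
        ring
      nlinarith [this]
    refine h1.trans ?_
    have := two_mul_le_add_sq (‖f z.1‖ * ‖g z.2‖) (‖g z.1‖ * ‖f z.2‖)
    simp only [hAdef, hBdef, mul_pow] at *
    nlinarith
  -- symmetry: ∫_S B = ∫_S A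
  have hswap : MeasurePreserving Prod.swap (volume : Measure (R3 × R3)) volume := by
    rw [MeasureTheory.Measure.volume_eq_prod]; exact Measure.measurePreserving_swap
  have hemb : MeasurableEmbedding (Prod.swap : R3 × R3 → R3 × R3) :=
    MeasurableEquiv.prodComm.measurableEmbedding
  have hpre : (Prod.swap : R3 × R3 → R3 × R3) ⁻¹' S = S := by
    ext z; simp [hSdef, norm_sub_rev]
  have hBA : ∫ z in S, B z = ∫ z in S, A z := by
    have := hswap.setIntegral_preimage_emb hemb A S
    rw [hpre] at this
    rw [← this]
    congr 1
    funext z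
    simp [hAdef, hBdef, Prod.swap, mul_comm]
  -- full integrals
  have hIA1 : ∫ z, A z = 1 := by
    have h5 := integral_prod_mul (μ := (volume : Measure R3)) (ν := (volume : Measure R3))
      (fun x => ‖f x‖ ^ 2) (fun y => ‖g y‖ ^ 2)
    rw [hfnorm, hgnorm, one_mul] at h5
    rw [MeasureTheory.Measure.volume_eq_prod]
    exact h5
  have hIB1 : ∫ z, B z = 1 := by
    have h5 := integral_prod_mul (μ := (volume : Measure R3)) (ν := (volume : Measure R3))
      (fun x => ‖g x‖ ^ 2) (fun y => ‖f y‖ ^ 2)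
    rw [hgnorm, hfnorm, one_mul] at h5
    rw [MeasureTheory.Measure.volume_eq_prod]
    exact h5
  set IA : ℝ := ∫ z in S, A z with hIAdef
  -- the main real inequality : ∫_S Q ≥ 4 IA - 2
  have hQlow : 4 * IA - 2 ≤ ∫ z in S, Q z := by
    have hsplitA : ∫ z in Sᶜ, A z = 1 - IA := by
      have := integral_add_compl hS hA; rw [hIA1] at this; linarith [this]
    have hsplitB : ∫ z in Sᶜ, B z = 1 - IA := by
      have := integral_add_compl hS hB; rw [hIB1, hBA] at this; linarith [this]
    have hCS : ∫ z in S, C z = -∫ z in Sᶜ, C z := by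
      have := integral_add_compl hS hC; rw [hCfull] at this; linarith [this]
    have hCcompl : -∫ z in Sᶜ, C z ≤ (1 - IA) + (1 - IA) := by
      have hmono : ∫ z in Sᶜ, (-(A z + B z)) ≤ ∫ z in Sᶜ, C z := by
        refine setIntegral_mono_on ((hA.add hB).neg).integrableOn hC.integrableOn
          hS.compl (fun z _ => ?_)
        have := hCbnd z
        have := neg_abs_le (C z)
        linarith
      rw [integral_neg, integral_add hA.integrableOn hB.integrableOn] at hmono
      rw [hsplitA, hsplitB] at hmono
      linarith
    have hQint : ∫ z in S, Q z = IA + IA - ∫ z in S, C z := by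
      have : ∫ z in S, Q z = ∫ z in S, (A z + B z - C z) :=
        integral_congr_ae (Filter.Eventually.of_forall fun z => hkey z)
      have h2 : ∫ z in S, (A z + B z - C z) = (∫ z in S, (A z + B z)) - ∫ z in S, C z :=
        integral_sub (hA.integrableOn.add hB.integrableOn) hC.integrableOn
      have h3 : ∫ z in S, (A z + B z) = IA + IA := by
        rw [integral_add hA.integrableOn hB.integrableOn, hBA]
      rw [this, h2, h3]
    rw [hQint, hCS]
    linarith
  -- nonnegativity of ∫_S Q (needed anyway)
  -- final chain
  rcases le_or_gt (2 * IA - 1) 0 with hneg | hpos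
  · have : (1 / r) * (2 * IA - 1) ≤ 0 :=
      mul_nonpos_of_nonneg_of_nonpos (by positivity) hneg
    rw [hIAdef] at this
    rw [ENNReal.ofReal_of_nonpos this]
    exact zero_le
  · -- 2 IA - 1 ≤ 4 IA - 2 ≤ ∫_S Q
    have hQpos : 2 * IA - 1 ≤ ∫ z in S, Q z := by linarith
    have step1 : ENNReal.ofReal ((1 / r) * (2 * IA - 1))
        ≤ ENNReal.ofReal (∫ z in S, (Q z / r)) := by
      apply ENNReal.ofReal_le_ofReal
      rw [integral_div]
      calc (1 / r) * (2 * IA - 1) = (2 * IA - 1) / r := by ring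
        _ ≤ (∫ z in S, Q z) / r := (div_le_div_iff_of_pos_right hr).mpr hQpos
    have step2 : ENNReal.ofReal (∫ z in S, (Q z / r))
        = ∫⁻ z in S, ENNReal.ofReal (Q z / r) := by
      refine ofReal_integral_eq_lintegral_ofReal (hQ.div_const r).integrableOn ?_
      exact (ae_restrict_iff' hS).mpr (Filter.Eventually.of_forall fun z _ => by positivity)
    have step3 : ∫⁻ z in S, ENNReal.ofReal (Q z / r)
        ≤ ∫⁻ z in S, ENNReal.ofReal (Q z / ‖z.1 - z.2‖) := by
      refine lintegral_mono_ae ((ae_restrict_iff' hS).mpr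
        (Filter.Eventually.of_forall fun z hz => ?_))
      rcases eq_or_lt_of_le (norm_nonneg (z.1 - z.2)) with hz0 | hz0
      · have hz12 : z.1 = z.2 := by
          rw [← sub_eq_zero]; exact norm_eq_zero.mp hz0.symm
        have : Q z = 0 := by
          rw [hQdef]; simp only
          rw [hz12, mul_comm (f z.2) (g z.2), sub_self, norm_zero]
          ring
        simp [this]
      · apply ENNReal.ofReal_le_ofReal
        exact div_le_div_of_nonneg_left (by positivity) hz0 (le_of_lt hz)
    calc ENNReal.ofReal ((1 / r) * (2 * IA - 1))
        ≤ ENNReal.ofReal (∫ z in S, (Q z / r)) := step1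
      _ = ∫⁻ z in S, ENNReal.ofReal (Q z / r) := step2
      _ ≤ ∫⁻ z in S, ENNReal.ofReal (Q z / ‖z.1 - z.2‖) := step3
end
end

section
/- Let σ₁, σ₂, σ₃ be the standard 2×2 Pauli matrices, and define the 4×4 Dirac matrices β := [[I₂, 0],[0, −I₂]] and αⱼ := [[0, σⱼ],[σⱼ, 0]] for j = 1,2,3. Set E(p) := √(1+|p|²) and s_p := ( Σ_{j=1}^{3} pⱼ αⱼ + β ) / E(p) ∈ M₄(ℂ) for p ∈ ℝ³. Then for all p, q ∈ ℝ³: ‖I₄ − s_p s_q‖ ≤ ‖s_p − s_q‖ ≤ 2|p−q| / max(E(p), E(q)), where ‖·‖ is the operator norm on ℂ⁴. -/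
open Matrix Real

set_option synthInstance.maxHeartbeats 1000000

noncomputable section

/-- The three Pauli matrices. -/
def pauli : Fin 3 → Matrix (Fin 2) (Fin 2) ℂ
  | 0 => !![0, 1; 1, 0]
  | 1 => !![0, -Complex.I; Complex.I, 0]
  | 2 => !![1, 0; 0, -1]

/-- The Dirac matrix `β = [[I₂, 0], [0, −I₂]]`. -/
def diracBeta : Matrix (Fin 4) (Fin 4) ℂ :=
  Matrix.reindex finSumFinEquiv finSumFinEquiv
    (Matrix.fromBlocks (1 : Matrix (Fin 2) (Fin 2) ℂ) (0 : Matrix (Fin 2) (Fin 2) ℂ)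
      (0 : Matrix (Fin 2) (Fin 2) ℂ) (-1 : Matrix (Fin 2) (Fin 2) ℂ))

/-- The Dirac matrices `αⱼ = [[0, σⱼ], [σⱼ, 0]]`. -/
def diracAlpha (j : Fin 3) : Matrix (Fin 4) (Fin 4) ℂ :=
  Matrix.reindex finSumFinEquiv finSumFinEquiv
    (Matrix.fromBlocks (0 : Matrix (Fin 2) (Fin 2) ℂ) (pauli j) (pauli j)
      (0 : Matrix (Fin 2) (Fin 2) ℂ))

/-- `E(p) = √(1+|p|²)`. -/
def Efun (p : R3) : ℝ := Real.sqrt (1 + ‖p‖ ^ 2)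

/-- The symbol `s_p = (Σ pⱼ αⱼ + β)/E(p)` of `sign(D⁰)`. -/
def signSymbol (p : R3) : Matrix (Fin 4) (Fin 4) ℂ :=
  (((Efun p)⁻¹ : ℝ) : ℂ) • (∑ j, ((p j : ℝ) : ℂ) • diracAlpha j + diracBeta)

/-- Operator norm (on `ℂ⁴`) of a `4 × 4` complex matrix. -/
def opNorm4 (A : Matrix (Fin 4) (Fin 4) ℂ) : ℝ :=
  ‖Matrix.toEuclideanCLM (𝕜 := ℂ) A‖

lemma diracBeta_eq : diracBeta = !![1,0,0,0; 0,1,0,0; 0,0,-1,0; 0,0,0,-1] := by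
  ext i j; fin_cases i <;> fin_cases j <;> first | rfl | exact neg_zero

lemma diracAlpha0_eq : diracAlpha 0 = !![0,0,0,1; 0,0,1,0; 0,1,0,0; 1,0,0,0] := by
  ext i j; fin_cases i <;> fin_cases j <;> first | rfl | exact neg_zero

lemma diracAlpha1_eq : diracAlpha 1 =
    !![0,0,0,-Complex.I; 0,0,Complex.I,0; 0,-Complex.I,0,0; Complex.I,0,0,0] := by
  ext i j; fin_cases i <;> fin_cases j <;> first | rfl | exact neg_zero

lemma diracAlpha2_eq : diracAlpha 2 = !![0,0,1,0; 0,0,0,-1; 1,0,0,0; 0,-1,0,0] := by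
  ext i j; fin_cases i <;> fin_cases j <;> first | rfl | exact neg_zero

/-- `Mt v c = Σ vⱼ αⱼ + c β`. -/
def Mt (v : R3) (c : ℝ) : Matrix (Fin 4) (Fin 4) ℂ :=
  ∑ j, ((v j : ℝ) : ℂ) • diracAlpha j + (c : ℂ) • diracBeta

lemma Mt_eq (v : R3) (c : ℝ) : Mt v c =
    !![(c:ℂ), 0, (v 2 : ℝ), ((v 0 : ℝ):ℂ) - ((v 1 : ℝ):ℂ)*Complex.I;
       0, (c:ℂ), ((v 0 : ℝ):ℂ) + ((v 1 : ℝ):ℂ)*Complex.I, -((v 2 : ℝ):ℂ);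
       ((v 2 : ℝ):ℂ), ((v 0 : ℝ):ℂ) - ((v 1 : ℝ):ℂ)*Complex.I, -(c:ℂ), 0;
       ((v 0 : ℝ):ℂ) + ((v 1 : ℝ):ℂ)*Complex.I, -((v 2 : ℝ):ℂ), 0, -(c:ℂ)] := by
  unfold Mt
  rw [Fin.sum_univ_three, diracAlpha0_eq, diracAlpha1_eq, diracAlpha2_eq, diracBeta_eq]
  ext i j
  fin_cases i <;> fin_cases j <;> (try simp) <;>
    (try simp [vecHead, vecTail, Function.comp]) <;> (try ring_nf)

lemma Mt_herm (v : R3) (c : ℝ) : (Mt v c)ᴴ = Mt v c := by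
  rw [Mt_eq]
  ext i j
  fin_cases i <;> fin_cases j <;>
    (try simp [Matrix.conjTranspose_apply, Complex.conj_ofReal]) <;> (try ring_nf)

lemma Mt_sq (v : R3) (c : ℝ) :
    Mt v c * Mt v c = (((‖v‖^2 + c^2 : ℝ)) : ℂ) • 1 := by
  have hv : ‖v‖^2 = v 0^2 + v 1^2 + v 2^2 := by
    rw [EuclideanSpace.norm_eq, Real.sq_sqrt (by positivity)]
    simp [Fin.sum_univ_three, sq_abs]
  rw [Mt_eq, hv]
  ext i j
  fin_cases i <;> fin_cases j <;>
    (try simp [Matrix.mul_apply, Fin.sum_univ_four, Matrix.one_apply, vecHead, vecTail]) <;>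
    (try push_cast) <;> (try ring_nf) <;> (try simp [Complex.I_sq]) <;> (try ring_nf)

lemma Efun_pos (p : R3) : 0 < Efun p := Real.sqrt_pos.mpr (by positivity)

lemma Efun_sq (p : R3) : Efun p ^ 2 = 1 + ‖p‖ ^ 2 := Real.sq_sqrt (by positivity)

lemma norm_le_Efun (p : R3) : ‖p‖ ≤ Efun p := by
  nlinarith [Efun_pos p, Efun_sq p, norm_nonneg p]

lemma Efun_lip (p q : R3) : |Efun p - Efun q| ≤ ‖p - q‖ := by
  have h1 := norm_sub_norm_le p q
  have h2 := norm_sub_norm_le q p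
  rw [norm_sub_rev] at h2
  rw [abs_sub_le_iff]
  constructor <;>
    nlinarith [Efun_pos p, Efun_pos q, Efun_sq p, Efun_sq q, norm_le_Efun p, norm_le_Efun q,
      norm_nonneg (p - q), norm_nonneg p, norm_nonneg q]

open scoped Matrix.Norms.L2Operator in
lemma opNorm4_eq (A : Matrix (Fin 4) (Fin 4) ℂ) : opNorm4 A = ‖A‖ :=
  (Matrix.cstar_norm_def A).symm

open scoped Matrix.Norms.L2Operator in
lemma l2norm_one4 : ‖(1 : Matrix (Fin 4) (Fin 4) ℂ)‖ = 1 := by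
  rw [Matrix.cstar_norm_def, _root_.map_one]
  exact norm_one

open scoped Matrix.Norms.L2Operator in
lemma opNorm4_of_sq (A : Matrix (Fin 4) (Fin 4) ℂ) (h1 : Aᴴ = A) (r : ℝ) (hr : 0 ≤ r)
    (h2 : A * A = ((r : ℝ) : ℂ) • 1) : opNorm4 A = Real.sqrt r := by
  have hsq : ‖A‖ * ‖A‖ = r := by
    rw [← Matrix.l2_opNorm_conjTranspose_mul_self, h1, h2, norm_smul, l2norm_one4]
    simp [Complex.norm_real, Real.norm_eq_abs, abs_of_nonneg hr]
  rw [opNorm4_eq, ← Real.sqrt_mul_self (norm_nonneg A), hsq]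

lemma opNorm4_Mt (v : R3) (c : ℝ) : opNorm4 (Mt v c) = Real.sqrt (‖v‖ ^ 2 + c ^ 2) :=
  opNorm4_of_sq _ (Mt_herm v c) _ (by positivity) (Mt_sq v c)

open scoped Matrix.Norms.L2Operator in
lemma l2norm_Mt_zero (v : R3) : ‖Mt v 0‖ = ‖v‖ := by
  rw [← opNorm4_eq, opNorm4_Mt]
  simp [Real.sqrt_sq (norm_nonneg v)]

open scoped Matrix.Norms.L2Operator in
lemma l2norm_Mt_one (v : R3) : ‖Mt v 1‖ = Efun v := by
  rw [← opNorm4_eq, opNorm4_Mt, Efun, add_comm]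
  norm_num

lemma signSymbol_eq (p : R3) : signSymbol p = (((Efun p)⁻¹ : ℝ) : ℂ) • Mt p 1 := by
  unfold signSymbol Mt
  norm_num

lemma signSymbol_herm (p : R3) : (signSymbol p)ᴴ = signSymbol p := by
  rw [signSymbol_eq, Matrix.conjTranspose_smul, Mt_herm]
  norm_num

lemma signSymbol_mul_self (p : R3) : signSymbol p * signSymbol p = 1 := by
  rw [signSymbol_eq, Matrix.smul_mul, Matrix.mul_smul, smul_smul, Mt_sq, smul_smul]
  have hE := (Efun_pos p).ne'
  have h : (((Efun p)⁻¹ : ℝ) : ℂ) * (((Efun p)⁻¹ : ℝ) : ℂ) * ((‖p‖ ^ 2 + 1 ^ 2 : ℝ) : ℂ) = 1 := by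
    have h2 : (‖p‖ ^ 2 + 1 ^ 2 : ℝ) = Efun p ^ 2 := by rw [Efun_sq]; ring
    rw [h2]
    have hE' : ((Efun p : ℝ) : ℂ) ≠ 0 := by exact_mod_cast hE
    push_cast
    field_simp
  rw [h, one_smul]

lemma opNorm4_signSymbol (p : R3) : opNorm4 (signSymbol p) = 1 := by
  have h := opNorm4_of_sq (signSymbol p) (signSymbol_herm p) 1 zero_le_one
    (by rw [signSymbol_mul_self]; norm_num)
  rw [h, Real.sqrt_one]

lemma signSymbol_split (p q : R3) : signSymbol p - signSymbol q =
    (((Efun p)⁻¹ : ℝ) : ℂ) • Mt (p - q) 0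
      + (((Efun p)⁻¹ - (Efun q)⁻¹ : ℝ) : ℂ) • Mt q 1 := by
  rw [signSymbol_eq, signSymbol_eq, Mt_eq, Mt_eq, Mt_eq]
  ext i j
  fin_cases i <;> fin_cases j <;> (try simp [PiLp.sub_apply]) <;>
    (try simp [vecHead, vecTail, Function.comp]) <;> (try push_cast) <;> (try ring_nf)

open scoped Matrix.Norms.L2Operator in
lemma opNorm4_bound_aux (p q : R3) :
    opNorm4 (signSymbol p - signSymbol q) ≤ 2 * ‖p - q‖ / Efun p := by
  have hEp := Efun_pos p
  have hEq := Efun_pos q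
  have hlip := Efun_lip p q
  have tnn : (0:ℝ) ≤ ‖p - q‖ := norm_nonneg _
  have step : opNorm4 (signSymbol p - signSymbol q)
      ≤ (Efun p)⁻¹ * ‖p - q‖ + |(Efun p)⁻¹ - (Efun q)⁻¹| * Efun q := by
    rw [opNorm4_eq, signSymbol_split p q]
    refine (norm_add_le _ _).trans ?_
    rw [norm_smul, norm_smul, l2norm_Mt_zero, l2norm_Mt_one]
    simp only [Complex.norm_real, Real.norm_eq_abs, abs_of_pos (inv_pos.mpr hEp)]
    exact le_refl _

  refine step.trans ?_
  have key : |(Efun p)⁻¹ - (Efun q)⁻¹| * Efun q ≤ ‖p - q‖ / Efun p := by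
    have h2 : (Efun p)⁻¹ - (Efun q)⁻¹ = (Efun q - Efun p) / (Efun p * Efun q) := by
      field_simp
    have h3 : |(Efun p)⁻¹ - (Efun q)⁻¹| = |Efun p - Efun q| / (Efun p * Efun q) := by
      rw [h2, abs_div, abs_of_pos (mul_pos hEp hEq), abs_sub_comm]
    have h4 : |Efun p - Efun q| / (Efun p * Efun q) * Efun q = |Efun p - Efun q| / Efun p := by
      field_simp
    rw [h3, h4]
    gcongr
  have harith : (Efun p)⁻¹ * ‖p - q‖ + ‖p - q‖ / Efun p = 2 * ‖p - q‖ / Efun p := by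
    field_simp
    ring
  linarith [key]

open scoped Matrix.Norms.L2Operator in
lemma opNorm4_sub_rev (p q : R3) :
    opNorm4 (signSymbol p - signSymbol q) = opNorm4 (signSymbol q - signSymbol p) := by
  rw [opNorm4_eq, opNorm4_eq, norm_sub_rev]

open scoped Matrix.Norms.L2Operator in
lemma opNorm4_first_bound (p q : R3) :
    opNorm4 (1 - signSymbol p * signSymbol q) ≤ opNorm4 (signSymbol p - signSymbol q) := by
  have h : (1 : Matrix (Fin 4) (Fin 4) ℂ) - signSymbol p * signSymbol q
      = signSymbol p * (signSymbol p - signSymbol q) := by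
    rw [mul_sub, signSymbol_mul_self]
  rw [h, opNorm4_eq, opNorm4_eq]
  calc ‖signSymbol p * (signSymbol p - signSymbol q)‖
      ≤ ‖signSymbol p‖ * ‖signSymbol p - signSymbol q‖ := norm_mul_le _ _
    _ = ‖signSymbol p - signSymbol q‖ := by
        rw [show ‖signSymbol p‖ = 1 from (opNorm4_eq _).symm.trans (opNorm4_signSymbol p),
          one_mul]

lemma opNorm4_second_bound (p q : R3) :
    opNorm4 (signSymbol p - signSymbol q) ≤ 2 * ‖p - q‖ / max (Efun p) (Efun q) := by
  rcases le_total (Efun p) (Efun q) with h | h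
  · rw [max_eq_right h, opNorm4_sub_rev, ← norm_sub_rev q p]
    exact opNorm4_bound_aux q p
  · rw [max_eq_left h]
    exact opNorm4_bound_aux p q

/-- `‖1 − s_p s_q‖ ≤ ‖s_p − s_q‖ ≤ 2|p−q| / max(E(p), E(q))`. -/
theorem signSymbol_difference_bound (p q : R3) :
    opNorm4 (1 - signSymbol p * signSymbol q) ≤ opNorm4 (signSymbol p - signSymbol q)
      ∧ opNorm4 (signSymbol p - signSymbol q) ≤ 2 * ‖p - q‖ / max (Efun p) (Efun q) :=
  ⟨opNorm4_first_bound p q, opNorm4_second_bound p q⟩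
end
end

section
/- For every Λ ≥ e and every p ∈ ℝ³, with E(t) := √(1+t²): E(|p|)^{1 + 1/log Λ} ≤ E(Λ)^{1/log Λ} · E(|p|) · (1 + |p|²/Λ²) ≤ (1 + e) · E(|p|) · (1 + |p|²/Λ²). -/
open Real

noncomputable section

private lemma one_le_sqrt_aux (x : ℝ) (hx : 0 ≤ x) : 1 ≤ Real.sqrt (1 + x) := by
  nlinarith [Real.sq_sqrt (by linarith : (0:ℝ) ≤ 1 + x),
    Real.sqrt_nonneg (1 + x)]

/-- key pointwise bound: `√(1+q²) ≤ √(1+Λ²)·(1+q²/Λ²)`. -/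
private lemma sqrt_le_mul_aux (Λ q : ℝ) (hΛ : 0 < Λ) (hq : 0 ≤ q) :
    Real.sqrt (1 + q ^ 2) ≤ Real.sqrt (1 + Λ ^ 2) * (1 + q ^ 2 / Λ ^ 2) := by
  have hΛsq : (0:ℝ) < Λ ^ 2 := by positivity
  have hdm : q ^ 2 / Λ ^ 2 * Λ ^ 2 = q ^ 2 := div_mul_cancel₀ _ (ne_of_gt hΛsq)
  have hc0 : (0:ℝ) ≤ q ^ 2 / Λ ^ 2 := by positivity
  have h1 : (1:ℝ) + q ^ 2 ≤ (1 + Λ ^ 2) * (1 + q ^ 2 / Λ ^ 2) ^ 2 := by nlinarith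
  calc Real.sqrt (1 + q ^ 2)
      ≤ Real.sqrt ((1 + Λ ^ 2) * (1 + q ^ 2 / Λ ^ 2) ^ 2) := Real.sqrt_le_sqrt h1
    _ = Real.sqrt (1 + Λ ^ 2) * (1 + q ^ 2 / Λ ^ 2) := by
        rw [Real.sqrt_mul (by positivity), Real.sqrt_sq (by positivity)]

private lemma exp_neg_two_lt : Real.exp (-2) < 1 / 4 := by
  have hexp2 : Real.exp 2 = Real.exp 1 * Real.exp 1 := by
    rw [← Real.exp_add]; norm_num
  have he2 : (2:ℝ) < Real.exp 1 := by have := Real.exp_one_gt_d9; linarith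
  have h4 : (4:ℝ) < Real.exp 2 := by rw [hexp2]; nlinarith
  have hprod : Real.exp (-2) * Real.exp 2 = 1 := by
    rw [← Real.exp_add]; norm_num
  nlinarith [Real.exp_pos (-2)]

/-- `1 + exp(-2)/2 ≤ log(1+e)`. -/
private lemma log_one_add_e_aux : 1 + Real.exp (-2) / 2 ≤ Real.log (1 + Real.exp 1) := by
  have h1e : (0:ℝ) < 1 + Real.exp 1 := by positivity
  rw [Real.le_log_iff_exp_le h1e]
  set x := Real.exp (-2) / 2 with hx
  have hx0 : 0 < x := by positivity
  have hxlt : x < 1 / 4 := by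
    have := exp_neg_two_lt; rw [hx]; linarith
  have hexpx : Real.exp x ≤ 1 / (1 - x) := by
    have h1 : 1 - x ≤ Real.exp (-x) := by
      have := Real.add_one_le_exp (-x); linarith
    have h2 : Real.exp x * Real.exp (-x) = 1 := by
      rw [← Real.exp_add]; simp
    rw [le_div_iff₀ (by linarith)]
    nlinarith [Real.exp_pos x, Real.exp_pos (-x)]
  have heq : Real.exp (1 + x) = Real.exp 1 * Real.exp x := by
    rw [← Real.exp_add]
  rw [heq]
  have he2 : (2:ℝ) < Real.exp 1 := by have := Real.exp_one_gt_d9; linarith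
  have he3 : Real.exp 1 < 3 := by have := Real.exp_one_lt_d9; linarith
  have hstep : Real.exp 1 * Real.exp x ≤ Real.exp 1 / (1 - x) := by
    rw [div_eq_mul_inv]
    have : Real.exp x ≤ (1 - x)⁻¹ := by rw [← one_div]; exact hexpx
    exact mul_le_mul_of_nonneg_left this (le_of_lt (Real.exp_pos 1))
  have hfinal : Real.exp 1 / (1 - x) ≤ 1 + Real.exp 1 := by
    rw [div_le_iff₀ (by linarith)]
    nlinarith
  linarith

/-- bound for the cutoff constant: `√(1+Λ²)^(1/log Λ) ≤ 1+e` for `Λ ≥ e`. -/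
private lemma const_bound_aux (Λ : ℝ) (hΛ : Real.exp 1 ≤ Λ) :
    Real.sqrt (1 + Λ ^ 2) ^ ((1 : ℝ) / Real.log Λ) ≤ 1 + Real.exp 1 := by
  have hΛ0 : (0:ℝ) < Λ := lt_of_lt_of_le (Real.exp_pos 1) hΛ
  have hL : (1:ℝ) ≤ Real.log Λ := by
    have h := Real.log_le_log (Real.exp_pos 1) hΛ
    simpa using h
  have hL0 : (0:ℝ) < Real.log Λ := by linarith
  have hΛsq : (0:ℝ) < Λ ^ 2 := by positivity
  have h1e : (0:ℝ) < 1 + Real.exp 1 := by positivity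
  have hb0 : (0:ℝ) < Real.sqrt (1 + Λ ^ 2) := Real.sqrt_pos.2 (by nlinarith)
  have hblog : Real.log (Real.sqrt (1 + Λ ^ 2)) = Real.log (1 + Λ ^ 2) / 2 :=
    Real.log_sqrt (by nlinarith)
  have hlogΛ2 : Real.log (1 + Λ ^ 2) ≤ 2 * Real.log Λ + 1 / Λ ^ 2 := by
    have hfac : (1:ℝ) + Λ ^ 2 = Λ ^ 2 * (1 + 1 / Λ ^ 2) := by field_simp; ring
    have h1 : Real.log (1 + Λ ^ 2)
        = Real.log (Λ ^ 2) + Real.log (1 + 1 / Λ ^ 2) := by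
      rw [hfac, Real.log_mul (ne_of_gt hΛsq) (by positivity)]
    have h2 : Real.log (Λ ^ 2) = 2 * Real.log Λ := by
      rw [Real.log_pow]; push_cast; ring
    have h3 : Real.log (1 + 1 / Λ ^ 2) ≤ 1 / Λ ^ 2 := by
      have := Real.log_le_sub_one_of_pos (show (0:ℝ) < 1 + 1 / Λ ^ 2 by positivity)
      linarith
    rw [h1, h2]; linarith
  have hexp2 : Real.exp 2 = Real.exp 1 * Real.exp 1 := by
    rw [← Real.exp_add]; norm_num
  have hΛ2big : Real.exp 2 ≤ Λ ^ 2 := by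
    rw [hexp2]; nlinarith [Real.exp_pos 1]
  have hinvΛ2 : 1 / Λ ^ 2 ≤ Real.exp (-2) := by
    rw [Real.exp_neg, ← one_div]
    exact one_div_le_one_div_of_le (Real.exp_pos 2) hΛ2big
  rw [Real.rpow_def_of_pos hb0,
    show (1:ℝ) + Real.exp 1 = Real.exp (Real.log (1 + Real.exp 1)) from
      (Real.exp_log h1e).symm]
  apply Real.exp_le_exp.2
  have hlogpos : (0:ℝ) ≤ Real.log (1 + Λ ^ 2) := Real.log_nonneg (by nlinarith)
  have hexppos : (0:ℝ) < Real.exp (-2) := Real.exp_pos _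
  have hstep : 1 / Real.log Λ * Real.log (Real.sqrt (1 + Λ ^ 2))
      ≤ 1 + Real.exp (-2) / 2 := by
    rw [hblog, div_mul_eq_mul_div, one_mul, div_div, div_le_iff₀ (by positivity)]
    nlinarith
  linarith [log_one_add_e_aux]

/-- Comparison of the symbols of `|D⁰|^{1+1/log Λ}` and of `|𝐃| = |D⁰|(1 − Δ/Λ²)`:
for `Λ ≥ e` and all `p ∈ ℝ³`, with `E(t) = √(1+t²)`,
`E(|p|)^{1+1/log Λ} ≤ E(Λ)^{1/log Λ} E(|p|)(1+|p|²/Λ²) ≤ (1+e) E(|p|)(1+|p|²/Λ²)`. -/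
theorem symbol_cutoff_comparison
    (Λ : ℝ) (hΛ : Real.exp 1 ≤ Λ) (p : R3) :
    Real.sqrt (1 + ‖p‖ ^ 2) ^ ((1 : ℝ) + 1 / Real.log Λ)
        ≤ Real.sqrt (1 + Λ ^ 2) ^ ((1 : ℝ) / Real.log Λ)
            * Real.sqrt (1 + ‖p‖ ^ 2) * (1 + ‖p‖ ^ 2 / Λ ^ 2)
      ∧ Real.sqrt (1 + Λ ^ 2) ^ ((1 : ℝ) / Real.log Λ)
            * Real.sqrt (1 + ‖p‖ ^ 2) * (1 + ‖p‖ ^ 2 / Λ ^ 2)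
          ≤ (1 + Real.exp 1) * (Real.sqrt (1 + ‖p‖ ^ 2) * (1 + ‖p‖ ^ 2 / Λ ^ 2)) := by
  have hΛ0 : (0:ℝ) < Λ := lt_of_lt_of_le (Real.exp_pos 1) hΛ
  have hL : (1:ℝ) ≤ Real.log Λ := by
    have h := Real.log_le_log (Real.exp_pos 1) hΛ
    simpa using h
  have hL0 : (0:ℝ) < Real.log Λ := by linarith
  have hq0 : (0:ℝ) ≤ ‖p‖ := norm_nonneg p
  have hq2 : (0:ℝ) ≤ ‖p‖ ^ 2 := by positivity
  have hc1 : (1:ℝ) ≤ 1 + ‖p‖ ^ 2 / Λ ^ 2 := by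
    have : (0:ℝ) ≤ ‖p‖ ^ 2 / Λ ^ 2 := by positivity
    linarith
  have ha0 : (0:ℝ) < Real.sqrt (1 + ‖p‖ ^ 2) := Real.sqrt_pos.2 (by positivity)
  have ha1 : (1:ℝ) ≤ Real.sqrt (1 + ‖p‖ ^ 2) := one_le_sqrt_aux _ hq2
  have hb0 : (0:ℝ) < Real.sqrt (1 + Λ ^ 2) := Real.sqrt_pos.2 (by positivity)
  have habc := sqrt_le_mul_aux Λ ‖p‖ hΛ0 hq0
  have hinvL0 : (0:ℝ) ≤ 1 / Real.log Λ := by positivity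
  have hkey : Real.sqrt (1 + ‖p‖ ^ 2) ^ ((1:ℝ) / Real.log Λ)
      ≤ Real.sqrt (1 + Λ ^ 2) ^ ((1:ℝ) / Real.log Λ) * (1 + ‖p‖ ^ 2 / Λ ^ 2) := by
    calc Real.sqrt (1 + ‖p‖ ^ 2) ^ ((1:ℝ) / Real.log Λ)
        ≤ (Real.sqrt (1 + Λ ^ 2) * (1 + ‖p‖ ^ 2 / Λ ^ 2)) ^ ((1:ℝ) / Real.log Λ) :=
          Real.rpow_le_rpow (le_of_lt ha0) habc hinvL0
      _ = Real.sqrt (1 + Λ ^ 2) ^ ((1:ℝ) / Real.log Λ)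
            * (1 + ‖p‖ ^ 2 / Λ ^ 2) ^ ((1:ℝ) / Real.log Λ) :=
          Real.mul_rpow (le_of_lt hb0) (by linarith)
      _ ≤ Real.sqrt (1 + Λ ^ 2) ^ ((1:ℝ) / Real.log Λ)
            * (1 + ‖p‖ ^ 2 / Λ ^ 2) ^ (1:ℝ) := by
          gcongr
          · rw [div_le_one hL0]; linarith
      _ = Real.sqrt (1 + Λ ^ 2) ^ ((1:ℝ) / Real.log Λ) * (1 + ‖p‖ ^ 2 / Λ ^ 2) := by
          rw [Real.rpow_one]
  constructor
  · have hsplit : Real.sqrt (1 + ‖p‖ ^ 2) ^ ((1:ℝ) + 1 / Real.log Λ)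
        = Real.sqrt (1 + ‖p‖ ^ 2) * Real.sqrt (1 + ‖p‖ ^ 2) ^ ((1:ℝ) / Real.log Λ) := by
      rw [Real.rpow_add ha0, Real.rpow_one]
    rw [hsplit]
    calc Real.sqrt (1 + ‖p‖ ^ 2) * Real.sqrt (1 + ‖p‖ ^ 2) ^ ((1:ℝ) / Real.log Λ)
        ≤ Real.sqrt (1 + ‖p‖ ^ 2)
            * (Real.sqrt (1 + Λ ^ 2) ^ ((1:ℝ) / Real.log Λ) * (1 + ‖p‖ ^ 2 / Λ ^ 2)) :=
          mul_le_mul_of_nonneg_left hkey (le_of_lt ha0)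
      _ = Real.sqrt (1 + Λ ^ 2) ^ ((1:ℝ) / Real.log Λ)
            * Real.sqrt (1 + ‖p‖ ^ 2) * (1 + ‖p‖ ^ 2 / Λ ^ 2) := by ring
  · have hbound := const_bound_aux Λ hΛ
    have hac : (0:ℝ) ≤ Real.sqrt (1 + ‖p‖ ^ 2) * (1 + ‖p‖ ^ 2 / Λ ^ 2) := by positivity
    calc Real.sqrt (1 + Λ ^ 2) ^ ((1:ℝ) / Real.log Λ)
          * Real.sqrt (1 + ‖p‖ ^ 2) * (1 + ‖p‖ ^ 2 / Λ ^ 2)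
        = Real.sqrt (1 + Λ ^ 2) ^ ((1:ℝ) / Real.log Λ)
            * (Real.sqrt (1 + ‖p‖ ^ 2) * (1 + ‖p‖ ^ 2 / Λ ^ 2)) := by ring
      _ ≤ (1 + Real.exp 1) * (Real.sqrt (1 + ‖p‖ ^ 2) * (1 + ‖p‖ ^ 2 / Λ ^ 2)) :=
          mul_le_mul_of_nonneg_right hbound hac
end
end

section
/- Let ρ ∈ L¹(ℝ³) be nonnegative and radial, i.e. ρ(x) = ρ(y) whenever |x| = |y|. Then for every x ∈ ℝ³ with x ≠ 0: ∫_{ℝ³} ρ(y)/|x−y| dy ≤ ( ∫_{ℝ³} ρ ) / |x|. -/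
open MeasureTheory

noncomputable section

open Set Metric Real ENNReal

namespace NewtonAux

abbrev E2 : Type := EuclideanSpace ℝ (Fin 2)

/-- Closed form for the Newton potential of a ball of radius `t` (divided by `2π`),
evaluated at a point of norm `a`. -/
def nf (a t : ℝ) : ℝ := if t ≤ a then 2*t^3/(3*a) else t^2 - a^2/3

section general

variable {E : Type*} [NormedAddCommGroup E] [NormedSpace ℝ E] [MeasurableSpace E] [BorelSpace E]
  [FiniteDimensional ℝ E] [Nontrivial E]

/-- Polar-coordinates transport of a lower integral, with no measurability assumptions. -/
lemma lintegral_eq_sphere_prod (μ : Measure E) [μ.IsAddHaarMeasure] (q : E → ℝ≥0∞) :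
    ∫⁻ y, q y ∂μ = ∫⁻ p : sphere (0:E) 1 × Ioi (0:ℝ), q ((p.2 : ℝ) • (p.1 : E))
      ∂(μ.toSphere.prod (Measure.volumeIoiPow (Module.finrank ℝ E - 1))) := by
  have h0 : MeasurableSet ({0}ᶜ : Set E) := (measurableSet_singleton 0).compl
  calc ∫⁻ y, q y ∂μ = ∫⁻ y in {0}ᶜ, q y ∂μ := by rw [restrict_compl_singleton]
    _ = ∫⁻ z : ({0}ᶜ : Set E), q z ∂(μ.comap (↑)) := (lintegral_subtype_comap h0 _).symm
    _ = ∫⁻ z : ({0}ᶜ : Set E),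
          q ((((homeomorphUnitSphereProd E) z).2 : ℝ) • (((homeomorphUnitSphereProd E) z).1 : E))
          ∂(μ.comap (↑)) := by
        refine lintegral_congr fun z => congrArg q ?_
        rw [← homeomorphUnitSphereProd_symm_apply_coe, Homeomorph.symm_apply_apply]
    _ = _ := μ.measurePreserving_homeomorphUnitSphereProd.lintegral_comp_emb
        (Homeomorph.measurableEmbedding _)
        (fun p : sphere (0:E) 1 × Ioi (0:ℝ) => q ((p.2 : ℝ) • (p.1 : E)))

lemma norm_smul_sphere (p : sphere (0:E) 1 × Ioi (0:ℝ)) :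
    ‖(p.2 : ℝ) • (p.1 : E)‖ = (p.2 : ℝ) := by
  rw [norm_smul, mem_sphere_zero_iff_norm.1 p.1.2, mul_one, Real.norm_eq_abs,
    abs_of_pos p.2.2]

/-- Lower integral of a radial function. -/
lemma lintegral_radial (μ : Measure E) [μ.IsAddHaarMeasure] {G : ℝ → ℝ≥0∞} (hG : Measurable G) :
    ∫⁻ y, G ‖y‖ ∂μ
      = μ.toSphere univ * ∫⁻ r in Ioi (0:ℝ),
          ENNReal.ofReal (r ^ (Module.finrank ℝ E - 1)) * G r := by
  rw [lintegral_eq_sphere_prod μ (fun y => G ‖y‖)]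
  have hmeas : Measurable fun p : sphere (0:E) 1 × Ioi (0:ℝ) => G (p.2 : ℝ) :=
    hG.comp (measurable_subtype_coe.comp measurable_snd)
  calc ∫⁻ p : sphere (0:E) 1 × Ioi (0:ℝ), G ‖(p.2 : ℝ) • (p.1 : E)‖
        ∂(μ.toSphere.prod (Measure.volumeIoiPow (Module.finrank ℝ E - 1)))
      = ∫⁻ p : sphere (0:E) 1 × Ioi (0:ℝ), G (p.2 : ℝ)
        ∂(μ.toSphere.prod (Measure.volumeIoiPow (Module.finrank ℝ E - 1))) :=
        lintegral_congr fun p => by rw [norm_smul_sphere]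
    _ = ∫⁻ _ω : sphere (0:E) 1, (∫⁻ r : Ioi (0:ℝ), G (r : ℝ)
          ∂(Measure.volumeIoiPow (Module.finrank ℝ E - 1))) ∂μ.toSphere :=
        lintegral_prod _ hmeas.aemeasurable
    _ = μ.toSphere univ * ∫⁻ r : Ioi (0:ℝ), G (r : ℝ)
          ∂(Measure.volumeIoiPow (Module.finrank ℝ E - 1)) := by
        rw [lintegral_const, mul_comm]
    _ = _ := by
        congr 1
        have h1 : Measurable fun r : Ioi (0:ℝ) =>
            ENNReal.ofReal ((r:ℝ) ^ (Module.finrank ℝ E - 1)) :=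
          (measurable_subtype_coe.pow_const _).ennreal_ofReal
        have h2 : Measurable fun r : Ioi (0:ℝ) => G (r:ℝ) := hG.comp measurable_subtype_coe
        rw [Measure.volumeIoiPow, lintegral_withDensity_eq_lintegral_mul _ h1 h2]
        simp only [Pi.mul_apply]
        exact lintegral_subtype_comap measurableSet_Ioi
          (fun r : ℝ => ENNReal.ofReal (r ^ (Module.finrank ℝ E - 1)) * G r)

end general

lemma toSphere_univ_E2 : (volume : Measure E2).toSphere univ = ENNReal.ofReal (2*π) := by
  rw [Measure.toSphere_apply_univ]
  have hball : volume (ball (0:E2) 1) = ENNReal.ofReal π := by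
    rw [EuclideanSpace.volume_ball]
    simp only [Fintype.card_fin, Nat.cast_ofNat]
    rw [show ((2:ℝ)/2 + 1) = 2 by norm_num, Real.Gamma_two,
      show Real.sqrt π ^ 2 = π from Real.sq_sqrt pi_pos.le]
    simp
  rw [hball, show Module.finrank ℝ E2 = 2 from finrank_euclideanSpace_fin]
  rw [show ((2:ℕ):ℝ≥0∞) = ENNReal.ofReal 2 by simp,
    ← ENNReal.ofReal_mul (by norm_num)]

lemma toSphere_univ_R3 : (volume : Measure R3).toSphere univ = ENNReal.ofReal (4*π) := by
  rw [Measure.toSphere_apply_univ]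
  have hball : volume (ball (0:R3) 1) = ENNReal.ofReal (4*π/3) := by
    rw [EuclideanSpace.volume_ball]
    simp only [Fintype.card_fin, Nat.cast_ofNat]
    have hG : Real.Gamma ((3:ℝ)/2 + 1) = 3/4 * Real.sqrt π := by
      rw [Real.Gamma_add_one (by norm_num)]
      have h2 : ((3:ℝ)/2) = 1/2 + 1 := by norm_num
      rw [h2, Real.Gamma_add_one (by norm_num), Real.Gamma_one_half_eq]
      ring
    rw [hG]
    have hs : Real.sqrt π ^ 3 = π * Real.sqrt π := by
      rw [pow_succ, show Real.sqrt π ^ 2 = π from Real.sq_sqrt pi_pos.le]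
    rw [hs]
    have hsne : Real.sqrt π ≠ 0 := ne_of_gt (Real.sqrt_pos.2 pi_pos)
    have : π * Real.sqrt π / (3/4 * Real.sqrt π) = 4*π/3 := by
      field_simp
    rw [this]
    simp
  rw [hball, show Module.finrank ℝ R3 = 3 from finrank_euclideanSpace_fin]
  rw [show ((3:ℕ):ℝ≥0∞) = ENNReal.ofReal 3 by simp, ← ENNReal.ofReal_mul (by norm_num)]
  congr 1
  ring

/-- The 2-dimensional radial integral appearing in the slicing computation. -/
lemma inner2 {b s : ℝ} (hb : b ≠ 0) (hs : 0 < s) :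
    ∫⁻ w in ball (0:E2) s, ENNReal.ofReal (Real.sqrt (b^2 + ‖w‖^2))⁻¹
      = ENNReal.ofReal (2*π) * ENNReal.ofReal (Real.sqrt (b^2+s^2) - |b|) := by
  have hXpos : ∀ r : ℝ, 0 < b^2 + r^2 := fun r => by positivity
  set G : ℝ → ℝ≥0∞ :=
    (Iio s).indicator (fun r => ENNReal.ofReal (Real.sqrt (b^2 + r^2))⁻¹) with hG_def
  have hGmeas : Measurable G := by
    refine Measurable.indicator ?_ measurableSet_Iio
    exact ((continuous_const.add (continuous_pow 2)).sqrt.measurable.inv).ennreal_ofReal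
  have key : ∫⁻ w in ball (0:E2) s, ENNReal.ofReal (Real.sqrt (b^2 + ‖w‖^2))⁻¹
      = ∫⁻ w : E2, G ‖w‖ := by
    rw [← lintegral_indicator measurableSet_ball]
    refine lintegral_congr fun w => ?_
    by_cases hw : ‖w‖ < s
    · rw [Set.indicator_of_mem (mem_ball_zero_iff.2 hw),
        hG_def, Set.indicator_of_mem (by exact hw)]
    · rw [Set.indicator_of_notMem (fun hmem => hw (mem_ball_zero_iff.1 hmem)),
        hG_def, Set.indicator_of_notMem (by exact hw)]
  rw [key, lintegral_radial volume hGmeas, toSphere_univ_E2]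
  congr 1
  rw [show Module.finrank ℝ E2 = 2 from finrank_euclideanSpace_fin]
  have step : ∫⁻ r in Ioi (0:ℝ), ENNReal.ofReal (r ^ (2-1)) * G r
      = ∫⁻ r in Ioo (0:ℝ) s, ENNReal.ofReal (r * (Real.sqrt (b^2 + r^2))⁻¹) := by
    have : ∀ r : ℝ, ENNReal.ofReal (r ^ (2-1)) * G r
        = (Iio s).indicator (fun r => ENNReal.ofReal (r ^ (2-1)) *
            ENNReal.ofReal (Real.sqrt (b^2 + r^2))⁻¹) r := by
      intro r
      by_cases hr : r ∈ Iio s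
      · rw [hG_def, Set.indicator_of_mem hr, Set.indicator_of_mem hr]
      · rw [hG_def, Set.indicator_of_notMem hr, Set.indicator_of_notMem hr, mul_zero]
    rw [lintegral_congr this, lintegral_indicator measurableSet_Iio,
      Measure.restrict_restrict measurableSet_Iio, Set.Iio_inter_Ioi]
    refine setLIntegral_congr_fun measurableSet_Ioo (fun r hr => ?_)
    rw [pow_one, ← ENNReal.ofReal_mul hr.1.le]
  rw [step]
  have hcont : Continuous fun r : ℝ => r * (Real.sqrt (b^2 + r^2))⁻¹ := by
    refine continuous_id.mul (Continuous.inv₀ ?_ ?_)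
    · exact (continuous_const.add (continuous_pow 2)).sqrt
    · exact fun r => ne_of_gt (Real.sqrt_pos.2 (hXpos r))
  have hint : IntegrableOn (fun r : ℝ => r * (Real.sqrt (b^2 + r^2))⁻¹) (Ioo 0 s) := by
    exact (hcont.integrableOn_Icc (a := 0) (b := s)).mono_set Ioo_subset_Icc_self
  rw [← ofReal_integral_eq_lintegral_ofReal hint]
  · congr 1
    have hEq : ∫ r in Ioo (0:ℝ) s, r * (Real.sqrt (b^2 + r^2))⁻¹
        = ∫ r in (0:ℝ)..s, r * (Real.sqrt (b^2 + r^2))⁻¹ := by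
      rw [intervalIntegral.integral_of_le hs.le, ← integral_Ioc_eq_integral_Ioo]
    rw [hEq]
    have hFTC : ∫ r in (0:ℝ)..s, r * (Real.sqrt (b^2 + r^2))⁻¹
        = Real.sqrt (b^2 + s^2) - Real.sqrt (b^2 + 0^2) := by
      refine intervalIntegral.integral_eq_sub_of_hasDerivAt
        (f := fun r => Real.sqrt (b^2 + r^2)) (fun r _ => ?_)
        (hcont.intervalIntegrable 0 s)
      have h1 : HasDerivAt (fun r : ℝ => b^2 + r^2) (2*r) r := by
        simpa using (hasDerivAt_pow 2 r).const_add (b^2)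
      have h2 := h1.sqrt (ne_of_gt (hXpos r))
      refine h2.congr_deriv ?_
      have hne : Real.sqrt (b^2 + r^2) ≠ 0 := ne_of_gt (Real.sqrt_pos.2 (hXpos r))
      ring
    rw [hFTC]
    norm_num [Real.sqrt_sq_eq_abs]
  · filter_upwards [ae_restrict_mem measurableSet_Ioo] with r hr
    have : 0 ≤ (Real.sqrt (b^2 + r^2))⁻¹ := inv_nonneg.2 (Real.sqrt_nonneg _)
    exact mul_nonneg hr.1.le this

lemma coordsum_E2 (u : E2) : u 0^2 + u 1^2 = ‖u‖^2 := by
  rw [EuclideanSpace.norm_eq, Real.sq_sqrt (by positivity)]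
  simp [Fin.sum_univ_two, Real.norm_eq_abs, sq_abs]

/-- The key explicit computation: the Newton potential of a ball, for a point on the axis. -/
lemma Vball_axis (a t : ℝ) (ha : 0 < a) (ht : 0 < t) :
    ∫⁻ y in ball (0:R3) t,
        ENNReal.ofReal ‖a • (EuclideanSpace.single (0:Fin 3) (1:ℝ)) - y‖⁻¹
      = ENNReal.ofReal (2*π) * ENNReal.ofReal (nf a t) := by
  set x0 : R3 := a • EuclideanSpace.single (0:Fin 3) (1:ℝ) with hx0
  set k : R3 → ℝ≥0∞ := fun y => ENNReal.ofReal ‖x0 - y‖⁻¹ with hk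
  have hkmeas : Measurable k :=
    ((continuous_const.sub continuous_id).norm.measurable.inv).ennreal_ofReal
  set Fn : R3 → ℝ≥0∞ := (ball (0:R3) t).indicator k with hFn
  have hFnmeas : Measurable Fn := hkmeas.indicator measurableSet_ball
  have step0 : ∫⁻ y in ball (0:R3) t, k y = ∫⁻ y, Fn y :=
    (lintegral_indicator measurableSet_ball _).symm
  have e3mp := (EuclideanSpace.volume_preserving_symm_measurableEquiv_toLp (Fin 3)).symm
  have step1 : ∫⁻ y, Fn y
      = ∫⁻ v : Fin 3 → ℝ, Fn ((MeasurableEquiv.toLp 2 (Fin 3 → ℝ)) v) :=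
    (e3mp.lintegral_comp_emb (MeasurableEquiv.measurableEmbedding _) Fn).symm
  have pfsmp := (MeasureTheory.volume_preserving_piFinSuccAbove (fun _ : Fin 3 => ℝ) 0).symm
  have step2 : ∫⁻ v : Fin 3 → ℝ, Fn ((MeasurableEquiv.toLp 2 (Fin 3 → ℝ)) v)
      = ∫⁻ p : ℝ × (Fin 2 → ℝ), Fn ((MeasurableEquiv.toLp 2 (Fin 3 → ℝ))
          ((MeasurableEquiv.piFinSuccAbove (fun _ : Fin 3 => ℝ) 0).symm p)) :=
    (pfsmp.lintegral_comp_emb (MeasurableEquiv.measurableEmbedding _) _).symm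
  -- pointwise description of the integrand in sliced coordinates
  have key : ∀ (h : ℝ) (w : Fin 2 → ℝ),
      Fn ((MeasurableEquiv.toLp 2 (Fin 3 → ℝ))
        ((MeasurableEquiv.piFinSuccAbove (fun _ : Fin 3 => ℝ) 0).symm (h, w)))
      = (ball (0:E2) (Real.sqrt (t^2 - h^2))).indicator
          (fun u => ENNReal.ofReal (Real.sqrt ((a-h)^2 + ‖u‖^2))⁻¹)
          ((MeasurableEquiv.toLp 2 (Fin 2 → ℝ)) w) := by
    intro h w
    set z : R3 := (MeasurableEquiv.toLp 2 (Fin 3 → ℝ))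
        ((MeasurableEquiv.piFinSuccAbove (fun _ : Fin 3 => ℝ) 0).symm (h, w)) with hzdef
    set u : E2 := (MeasurableEquiv.toLp 2 (Fin 2 → ℝ)) w with hudef
    have hzf : z = WithLp.toLp 2 (Fin.insertNth (0 : Fin 3) h w) := rfl
    have hz0 : z 0 = h := by rw [hzf]; simp
    have hz1 : z 1 = w 0 := by
      rw [hzf, show (1 : Fin 3) = (0 : Fin 3).succAbove 0 by decide]
      exact Fin.insertNth_apply_succAbove (α := fun _ : Fin 3 => ℝ) (0 : Fin 3) h w 0
    have hz2 : z 2 = w 1 := by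
      rw [hzf, show (2 : Fin 3) = (0 : Fin 3).succAbove 1 by decide]
      exact Fin.insertNth_apply_succAbove (α := fun _ : Fin 3 => ℝ) (0 : Fin 3) h w 1
    have hu : ∀ i, u i = w i := fun i => rfl
    have hsum : w 0^2 + w 1^2 = ‖u‖^2 := by rw [← hu 0, ← hu 1]; exact coordsum_E2 u
    have hx00 : x0 0 = a := by rw [hx0]; simp [EuclideanSpace.single_apply]
    have hx01 : x0 1 = 0 := by rw [hx0]; simp [EuclideanSpace.single_apply]
    have hx02 : x0 2 = 0 := by rw [hx0]; simp [EuclideanSpace.single_apply]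
    have hxz : ‖x0 - z‖ = Real.sqrt ((a-h)^2 + ‖u‖^2) := by
      rw [EuclideanSpace.norm_eq]
      congr 1
      rw [Fin.sum_univ_three]
      simp only [PiLp.sub_apply, hx00, hx01, hx02, hz0, hz1, hz2, Real.norm_eq_abs, sq_abs,
        zero_sub, neg_sq]
      rw [← hsum]
      ring
    have hzn : ‖z‖ = Real.sqrt (h^2 + ‖u‖^2) := by
      rw [EuclideanSpace.norm_eq]
      congr 1
      rw [Fin.sum_univ_three]
      simp only [hz0, hz1, hz2, Real.norm_eq_abs, sq_abs]
      rw [← hsum]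
      ring
    have hmem : z ∈ ball (0:R3) t ↔ u ∈ ball (0:E2) (Real.sqrt (t^2 - h^2)) := by
      rw [mem_ball_zero_iff, mem_ball_zero_iff, hzn, Real.sqrt_lt' ht,
        Real.lt_sqrt (norm_nonneg u)]
      constructor <;> intro hh <;> linarith
    by_cases hin : z ∈ ball (0:R3) t
    · rw [hFn, Set.indicator_of_mem hin, Set.indicator_of_mem (hmem.1 hin)]
      show ENNReal.ofReal ‖x0 - z‖⁻¹ = _
      rw [hxz]
    · rw [hFn, Set.indicator_of_notMem hin,
        Set.indicator_of_notMem (fun hmem2 => hin (hmem.2 hmem2))]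
  -- the inner integral
  set g1 : ℝ → ℝ :=
    (Ioo (-t) t).indicator (fun h => 2*π*(Real.sqrt (a^2+t^2-2*a*h) - |a-h|)) with hg1
  have inner_eq : ∀ h : ℝ, h ≠ a →
      (∫⁻ w : Fin 2 → ℝ, Fn ((MeasurableEquiv.toLp 2 (Fin 3 → ℝ))
          ((MeasurableEquiv.piFinSuccAbove (fun _ : Fin 3 => ℝ) 0).symm (h, w))))
        = ENNReal.ofReal (g1 h) := by
    intro h hha
    have e2mp := (EuclideanSpace.volume_preserving_symm_measurableEquiv_toLp (Fin 2)).symm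
    calc ∫⁻ w : Fin 2 → ℝ, Fn ((MeasurableEquiv.toLp 2 (Fin 3 → ℝ))
          ((MeasurableEquiv.piFinSuccAbove (fun _ : Fin 3 => ℝ) 0).symm (h, w)))
        = ∫⁻ w : Fin 2 → ℝ, (ball (0:E2) (Real.sqrt (t^2 - h^2))).indicator
            (fun u => ENNReal.ofReal (Real.sqrt ((a-h)^2 + ‖u‖^2))⁻¹)
            ((MeasurableEquiv.toLp 2 (Fin 2 → ℝ)) w) :=
          lintegral_congr fun w => key h w
      _ = ∫⁻ u : E2, (ball (0:E2) (Real.sqrt (t^2 - h^2))).indicator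
            (fun u => ENNReal.ofReal (Real.sqrt ((a-h)^2 + ‖u‖^2))⁻¹) u := by
          exact e2mp.lintegral_comp_emb (MeasurableEquiv.measurableEmbedding _) _
      _ = ∫⁻ u in ball (0:E2) (Real.sqrt (t^2 - h^2)),
            ENNReal.ofReal (Real.sqrt ((a-h)^2 + ‖u‖^2))⁻¹ :=
          lintegral_indicator measurableSet_ball _
      _ = ENNReal.ofReal (g1 h) := by
          by_cases hh : h ∈ Ioo (-t) t
          · have hs : (0:ℝ) < Real.sqrt (t^2 - h^2) := by
              refine Real.sqrt_pos.2 ?_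
              nlinarith [hh.1, hh.2]
            have hb : a - h ≠ 0 := fun hc => hha (by linarith [sub_eq_zero.1 hc])
            rw [inner2 hb hs]
            rw [Real.sq_sqrt (by nlinarith [hh.1, hh.2] : (0:ℝ) ≤ t^2 - h^2)]
            rw [← ENNReal.ofReal_mul (by positivity)]
            rw [hg1, Set.indicator_of_mem hh]
            congr 2
            ring_nf
          · have hs0 : Real.sqrt (t^2 - h^2) = 0 := by
              refine Real.sqrt_eq_zero_of_nonpos ?_
              simp only [mem_Ioo, not_and, not_lt] at hh
              rcases le_or_gt h (-t) with h1 | h2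
              · nlinarith
              · nlinarith [hh h2]
            rw [hs0, show ball (0:E2) 0 = ∅ from ball_eq_empty.2 le_rfl]
            rw [hg1, Set.indicator_of_notMem hh]
            simp
  -- measurability of the full integrand on the product space
  have hprodmeas : Measurable fun p : ℝ × (Fin 2 → ℝ) =>
      Fn ((MeasurableEquiv.toLp 2 (Fin 3 → ℝ))
        ((MeasurableEquiv.piFinSuccAbove (fun _ : Fin 3 => ℝ) 0).symm p)) :=
    (hFnmeas.comp (MeasurableEquiv.measurable _)).comp (MeasurableEquiv.measurable _)
  rw [step0, step1, step2, Measure.volume_eq_prod, lintegral_prod _ hprodmeas.aemeasurable]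
  have hae : ∀ᵐ h : ℝ ∂(volume : Measure ℝ), h ≠ a := by
    filter_upwards [(Set.countable_singleton a).ae_notMem volume] with h hh
    simpa using hh
  rw [lintegral_congr_ae (hae.mono fun h hh => inner_eq h hh)]
  -- now a 1-dimensional computation
  have hG1cont : Continuous (fun h : ℝ => 2*π*(Real.sqrt (a^2+t^2-2*a*h) - |a-h|)) := by
    refine continuous_const.mul (Continuous.sub ?_ ?_)
    · exact (continuous_const.sub (continuous_const.mul continuous_id)).sqrt
    · exact (continuous_const.sub continuous_id).abs
  have hg1int : Integrable g1 := by
    rw [hg1, integrable_indicator_iff measurableSet_Ioo]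
    exact (hG1cont.integrableOn_Icc).mono_set Ioo_subset_Icc_self
  have hg1nn : 0 ≤ᵐ[volume] g1 := by
    refine ae_of_all _ fun h => ?_
    rw [hg1]
    refine Set.indicator_nonneg (fun h hh => ?_) h
    have h1 : |a - h| ≤ Real.sqrt (a^2+t^2-2*a*h) := by
      rw [← Real.sqrt_sq_eq_abs]
      refine Real.sqrt_le_sqrt ?_
      nlinarith [hh.1, hh.2]
    have h2 : (0:ℝ) ≤ 2*π := by positivity
    nlinarith
  rw [← ofReal_integral_eq_lintegral_ofReal hg1int hg1nn]
  -- compute the real integral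
  have hint1 : ∫ h, g1 h = ∫ h in (-t)..t, 2*π*(Real.sqrt (a^2+t^2-2*a*h) - |a-h|) := by
    rw [hg1, integral_indicator measurableSet_Ioo,
      intervalIntegral.integral_of_le (by linarith : -t ≤ t), integral_Ioc_eq_integral_Ioo]
  have hsqrtcont : Continuous fun h : ℝ => Real.sqrt (a^2+t^2-2*a*h) :=
    (continuous_const.sub (continuous_const.mul continuous_id)).sqrt
  have habscont : Continuous fun h : ℝ => |a - h| := (continuous_const.sub continuous_id).abs
  have hI1 : ∫ h in (-t)..t, Real.sqrt (a^2+t^2-2*a*h)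
      = ((a+t)^3 - |a-t|^3) / (3*a) := by
    have hXpos : ∀ h : ℝ, h ∈ Ioo (-t) t → (0:ℝ) < a^2+t^2-2*a*h := by
      intro h hh
      nlinarith [sq_nonneg (a - t), hh.2]
    have hftc := intervalIntegral.integral_eq_sub_of_hasDerivAt_of_le
      (f := fun h : ℝ => -(a^2+t^2-2*a*h) * Real.sqrt (a^2+t^2-2*a*h) / (3*a))
      (f' := fun h : ℝ => Real.sqrt (a^2+t^2-2*a*h))
      (by linarith : -t ≤ t)
      (by fun_prop)
      ?_ (hsqrtcont.intervalIntegrable _ _)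
    · rw [hftc]
      beta_reduce
      have e1 : a^2+t^2-2*a*t = (a-t)^2 := by ring
      have e2 : a^2+t^2-2*a*(-t) = (a+t)^2 := by ring
      rw [e1, e2, Real.sqrt_sq_eq_abs, Real.sqrt_sq_eq_abs,
        abs_of_pos (by linarith : (0:ℝ) < a+t)]
      generalize hmm : |a - t| = m
      have hm2 : m^2 = (a-t)^2 := by rw [← hmm]; exact sq_abs _
      rw [← hm2]
      field_simp
      ring
    · intro h hh
      have hX := hXpos h hh
      have hne : Real.sqrt (a^2+t^2-2*a*h) ≠ 0 := ne_of_gt (Real.sqrt_pos.2 hX)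
      have hd1 : HasDerivAt (fun h : ℝ => a^2+t^2-2*a*h) (-(2*a)) h := by
        simpa using ((hasDerivAt_id h).const_mul (2*a)).const_sub (a^2+t^2)
      have hd2 := hd1.sqrt (ne_of_gt hX)
      have hd3 := (hd1.neg.mul hd2).div_const (3*a)
      refine hd3.congr_deriv ?_
      have hsq : Real.sqrt (a^2+t^2-2*a*h) * Real.sqrt (a^2+t^2-2*a*h)
          = a^2+t^2-2*a*h := Real.mul_self_sqrt hX.le
      simp only [Pi.neg_apply]
      field_simp
      nlinarith [hsq]
  have hI2 : ∫ h in (-t)..t, |a-h|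
      = (if t ≤ a then 2*t*a else a^2+t^2) := by
    by_cases hta : t ≤ a
    · rw [if_pos hta]
      have hcg : ∀ h ∈ uIcc (-t) t, |a - h| = a - h := by
        intro h hh
        rw [uIcc_of_le (by linarith : -t ≤ t)] at hh
        exact abs_of_nonneg (by linarith [hh.2])
      rw [intervalIntegral.integral_congr hcg,
        intervalIntegral.integral_sub (intervalIntegrable_const)
          intervalIntegral.intervalIntegrable_id,
        intervalIntegral.integral_const, integral_id]
      simp only [smul_eq_mul]
      ring
    · rw [if_neg hta]
      push_neg at hta
      have hii : ∀ p q : ℝ, IntervalIntegrable (fun h : ℝ => |a - h|) volume p q :=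
        fun p q => habscont.intervalIntegrable p q
      rw [← intervalIntegral.integral_add_adjacent_intervals (hii (-t) a) (hii a t)]
      have hcg1 : ∀ h ∈ uIcc (-t) a, |a - h| = a - h := by
        intro h hh
        rw [uIcc_of_le (by linarith : -t ≤ a)] at hh
        exact abs_of_nonneg (by linarith [hh.2])
      have hcg2 : ∀ h ∈ uIcc a t, |a - h| = h - a := by
        intro h hh
        rw [uIcc_of_le (by linarith : a ≤ t)] at hh
        rw [abs_of_nonpos (by linarith [hh.1]), neg_sub]
      rw [intervalIntegral.integral_congr hcg1, intervalIntegral.integral_congr hcg2,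
        intervalIntegral.integral_sub (intervalIntegrable_const) intervalIntegral.intervalIntegrable_id,
        intervalIntegral.integral_sub intervalIntegral.intervalIntegrable_id (intervalIntegrable_const),
        intervalIntegral.integral_const, intervalIntegral.integral_const,
        integral_id, integral_id]
      simp only [smul_eq_mul]
      ring
  rw [hint1, intervalIntegral.integral_const_mul,
    intervalIntegral.integral_sub (hsqrtcont.intervalIntegrable _ _)
      (habscont.intervalIntegrable _ _), hI1, hI2]
  rw [← ENNReal.ofReal_mul (by positivity : (0:ℝ) ≤ 2*π)]
  congr 1
  rw [nf]
  by_cases hta : t ≤ a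
  · rw [if_pos hta, if_pos hta, abs_of_nonneg (by linarith : (0:ℝ) ≤ a - t)]
    field_simp
    ring
  · rw [if_neg hta, if_neg hta]
    push_neg at hta
    rw [abs_of_neg (by linarith : a - t < 0)]
    field_simp
    ring

/-- Any two vectors of the same norm are related by a linear isometry. -/
lemma exists_iso (u v : R3) (hnorm : ‖u‖ = ‖v‖) : ∃ e : R3 ≃ₗᵢ[ℝ] R3, e u = v := by
  by_cases hw : u + v = 0
  · refine ⟨LinearIsometryEquiv.neg ℝ, ?_⟩
    have : v = -u := eq_neg_of_add_eq_zero_right hw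
    simp [this]
  · set w : R3 := u + v with hwdef
    have hwne : w ≠ 0 := hw
    refine ⟨Submodule.reflection (ℝ ∙ w), ?_⟩
    have hproj := Submodule.starProjection_singleton (𝕜 := ℝ) (v := w) u
    rw [Submodule.reflection_apply, hproj]
    simp only [RCLike.ofReal_real_eq_id, id_eq]
    have hcoef : 2 * (inner ℝ w u : ℝ) = ‖w‖^2 := by
      have h1 : (inner ℝ w u : ℝ) = (inner ℝ u u : ℝ) + (inner ℝ v u : ℝ) := by
        rw [hwdef, inner_add_left]
      have h2 : (inner ℝ u u : ℝ) = ‖u‖^2 := real_inner_self_eq_norm_sq u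
      have h3 : ‖w‖^2 = ‖u‖^2 + 2*(inner ℝ u v : ℝ) + ‖v‖^2 := by
        rw [hwdef]; exact norm_add_sq_real u v
      have h4 : (inner ℝ v u : ℝ) = (inner ℝ u v : ℝ) := real_inner_comm u v
      rw [h1, h2, h4, h3, ← hnorm]
      ring
    have hwn : ‖w‖ ≠ 0 := norm_ne_zero_iff.2 hwne
    have hone : ((inner ℝ w u : ℝ) / ‖w‖^2) + ((inner ℝ w u : ℝ) / ‖w‖^2) = 1 := by
      rw [← add_div]
      rw [show (inner ℝ w u : ℝ) + (inner ℝ w u : ℝ) = 2 * (inner ℝ w u : ℝ) by ring, hcoef]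
      field_simp
    rw [two_smul, ← add_smul, hone, one_smul]
    rw [hwdef]
    exact add_sub_cancel_left u v

/-- Newton potential of a ball, general evaluation point. -/
lemma Vball (x : R3) (hx : x ≠ 0) {t : ℝ} (ht : 0 < t) :
    ∫⁻ y in ball (0:R3) t, ENNReal.ofReal ‖x - y‖⁻¹
      = ENNReal.ofReal (2*π) * ENNReal.ofReal (nf ‖x‖ t) := by
  have ha : 0 < ‖x‖ := norm_pos_iff.2 hx
  set v : R3 := ‖x‖ • EuclideanSpace.single (0:Fin 3) (1:ℝ) with hv
  have hvn : ‖v‖ = ‖x‖ := by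
    rw [hv, norm_smul, EuclideanSpace.norm_single]
    simp [abs_of_pos ha]
  obtain ⟨e, he⟩ := exists_iso v x hvn
  have hmp := e.measurePreserving (F := R3)
  have hemb : MeasurableEmbedding e := e.toHomeomorph.measurableEmbedding
  have himg : e '' ball (0:R3) t = ball (0:R3) t := by
    ext z
    constructor
    · rintro ⟨z0, hz0, rfl⟩
      rw [mem_ball_zero_iff] at hz0 ⊢
      rwa [e.norm_map]
    · intro hz
      refine ⟨e.symm z, ?_, by simp⟩
      rw [mem_ball_zero_iff] at hz ⊢
      rwa [e.symm.norm_map]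
  have := hmp.setLIntegral_comp_emb hemb (fun y => ENNReal.ofReal ‖x - y‖⁻¹) (ball (0:R3) t)
  rw [himg] at this
  rw [← this]
  have : ∀ z : R3, ‖x - e z‖ = ‖v - z‖ := by
    intro z
    rw [← he, ← map_sub, e.norm_map]
  calc ∫⁻ z in ball (0:R3) t, ENNReal.ofReal ‖x - e z‖⁻¹
      = ∫⁻ z in ball (0:R3) t, ENNReal.ofReal ‖v - z‖⁻¹ := by
        refine lintegral_congr fun z => by rw [this z]
    _ = ENNReal.ofReal (2*π) * ENNReal.ofReal (nf ‖x‖ t) := Vball_axis ‖x‖ t ha ht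

/-- The density-side computation. -/
lemma Wint {a : ℝ} (ha : 0 < a) {τ : ℝ} (hτ : 0 < τ) :
    ∫⁻ r in Ioo (0:ℝ) τ, ENNReal.ofReal (r^2) *
        (ENNReal.ofReal (4*π) / ENNReal.ofReal (max a r))
      = ENNReal.ofReal (2*π) * ENNReal.ofReal (nf a τ) := by
  have hmaxpos : ∀ r : ℝ, 0 < max a r := fun r => lt_max_of_lt_left ha
  have hcong : ∀ r ∈ Ioo (0:ℝ) τ, ENNReal.ofReal (r^2) *
      (ENNReal.ofReal (4*π) / ENNReal.ofReal (max a r))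
      = ENNReal.ofReal (r^2 * (4*π / max a r)) := by
    intro r hr
    rw [← ENNReal.ofReal_div_of_pos (hmaxpos r), ← ENNReal.ofReal_mul (sq_nonneg r)]
  rw [setLIntegral_congr_fun measurableSet_Ioo hcong]
  have hwcont : Continuous fun r : ℝ => r^2 * (4*π / max a r) := by
    refine (continuous_pow 2).mul (continuous_const.div ?_ ?_)
    · exact continuous_const.max continuous_id
    · exact fun r => ne_of_gt (hmaxpos r)
  have hwint : IntegrableOn (fun r : ℝ => r^2 * (4*π / max a r)) (Ioo 0 τ) :=
    (hwcont.integrableOn_Icc).mono_set Ioo_subset_Icc_self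
  rw [← ofReal_integral_eq_lintegral_ofReal hwint]
  · rw [← ENNReal.ofReal_mul (by positivity : (0:ℝ) ≤ 2*π)]
    congr 1
    have hEq : ∫ r in Ioo (0:ℝ) τ, r^2 * (4*π / max a r)
        = ∫ r in (0:ℝ)..τ, r^2 * (4*π / max a r) := by
      rw [intervalIntegral.integral_of_le hτ.le, ← integral_Ioc_eq_integral_Ioo]
    rw [hEq, nf]
    by_cases hta : τ ≤ a
    · rw [if_pos hta]
      have hcg : ∀ r ∈ uIcc (0:ℝ) τ, r^2 * (4*π / max a r) = (4*π/a) * r^2 := by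
        intro r hr
        rw [uIcc_of_le hτ.le] at hr
        rw [max_eq_left (by linarith [hr.2] : r ≤ a)]
        ring
      rw [intervalIntegral.integral_congr hcg, intervalIntegral.integral_const_mul,
        integral_pow]
      field_simp
      ring
    · rw [if_neg hta]
      push_neg at hta
      have hii : ∀ p q : ℝ, IntervalIntegrable (fun r : ℝ => r^2 * (4*π / max a r)) volume p q :=
        fun p q => hwcont.intervalIntegrable p q
      rw [← intervalIntegral.integral_add_adjacent_intervals (hii 0 a) (hii a τ)]
      have hcg1 : ∀ r ∈ uIcc (0:ℝ) a, r^2 * (4*π / max a r) = (4*π/a) * r^2 := by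
        intro r hr
        rw [uIcc_of_le ha.le] at hr
        rw [max_eq_left (by linarith [hr.2] : r ≤ a)]
        ring
      have hcg2 : ∀ r ∈ uIcc a τ, r^2 * (4*π / max a r) = (4*π) * r := by
        intro r hr
        rw [uIcc_of_le hta.le] at hr
        have hra : a ≤ r := hr.1
        have hrpos : 0 < r := lt_of_lt_of_le ha hra
        rw [max_eq_right hra]
        field_simp
      rw [intervalIntegral.integral_congr hcg1, intervalIntegral.integral_congr hcg2,
        intervalIntegral.integral_const_mul, intervalIntegral.integral_const_mul,
        integral_pow, integral_id]
      field_simp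
      ring
  · filter_upwards [ae_restrict_mem measurableSet_Ioo] with r hr
    have : (0:ℝ) ≤ 4*π / max a r := by positivity
    positivity

end NewtonAux

/-- Newton's theorem bound: for a nonnegative radial `ρ ∈ L¹(ℝ³)` and any `x ≠ 0`,
`∫ ρ(y)/|x−y| dy ≤ (∫ ρ)/|x|`. -/
theorem newton_radial_potential_bound
    (ρ : R3 → ℝ) (hint : Integrable ρ) (hpos : ∀ x, 0 ≤ ρ x)
    (hrad : ∀ x y : R3, ‖x‖ = ‖y‖ → ρ x = ρ y)
    (x : R3) (hx : x ≠ 0) :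
    ∫⁻ y, ENNReal.ofReal (ρ y / ‖x - y‖) ≤ ENNReal.ofReal ((∫ y, ρ y) / ‖x‖) := by
  classical
  have ha : 0 < ‖x‖ := norm_pos_iff.2 hx
  set f : R3 → ℝ≥0∞ := fun y => ENNReal.ofReal (ρ y) with hf_def
  set k : R3 → ℝ≥0∞ := fun y => ENNReal.ofReal ‖x - y‖⁻¹ with hk_def
  have hkmeas : Measurable k :=
    ((continuous_const.sub continuous_id).norm.measurable.inv).ennreal_ofReal
  have hfaem : AEMeasurable f volume := hint.aestronglyMeasurable.aemeasurable.ennreal_ofReal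
  have step1 : ∫⁻ y, ENNReal.ofReal (ρ y / ‖x - y‖) = ∫⁻ y, f y * k y :=
    lintegral_congr fun y => by rw [div_eq_mul_inv, ENNReal.ofReal_mul (hpos y)]
  set ν : Measure (sphere (0:R3) 1) := (volume : Measure R3).toSphere with hν
  set μr : Measure (Ioi (0:ℝ)) := Measure.volumeIoiPow 2 with hμr
  have hdim : Module.finrank ℝ R3 - 1 = 2 := by rw [finrank_euclideanSpace_fin]
  have transport : ∀ q : R3 → ℝ≥0∞,
      ∫⁻ y, q y = ∫⁻ p : sphere (0:R3) 1 × Ioi (0:ℝ),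
        q ((p.2 : ℝ) • (p.1 : R3)) ∂(ν.prod μr) := by
    intro q
    have := NewtonAux.lintegral_eq_sphere_prod (volume : Measure R3) q
    rwa [hdim] at this
  set Θ : Ioi (0:ℝ) → ℝ≥0∞ :=
    fun r => ∫⁻ ω : sphere (0:R3) 1, k ((r:ℝ) • (ω:R3)) ∂ν with hΘ
  have hsmulmeas : Measurable fun p : sphere (0:R3) 1 × Ioi (0:ℝ) =>
      ((p.2:ℝ) • (p.1:R3)) := by
    apply Continuous.measurable
    exact (continuous_subtype_val.comp continuous_snd).smul
      (continuous_subtype_val.comp continuous_fst)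
  have hΘmeas : Measurable Θ :=
    Measurable.lintegral_prod_left (hkmeas.comp hsmulmeas)
  set F : Ioi (0:ℝ) → ℝ≥0∞ :=
    fun r => ENNReal.ofReal (ρ ((r:ℝ) • (EuclideanSpace.single (0:Fin 3) (1:ℝ)))) with hF
  have hFval : ∀ (r : Ioi (0:ℝ)) (ω : sphere (0:R3) 1), f ((r:ℝ) • (ω:R3)) = F r := by
    intro r ω
    refine congrArg ENNReal.ofReal (hrad _ _ ?_)
    rw [NewtonAux.norm_smul_sphere (ω, r), norm_smul, EuclideanSpace.norm_single]
    simp [abs_of_pos (mem_Ioi.1 r.2)]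
  have hFne : ∀ r, F r ≠ ⊤ := fun r => ENNReal.ofReal_ne_top
  have hpull : ∀ g : R3 → ℝ≥0∞, AEMeasurable g volume →
      AEMeasurable (fun p : sphere (0:R3) 1 × Ioi (0:ℝ) =>
        g ((p.2:ℝ) • (p.1:R3))) (ν.prod μr) := by
    intro g hg
    have h0 : MeasurableSet ({0}ᶜ : Set R3) := (measurableSet_singleton 0).compl
    have h2 : AEMeasurable (fun z : ({0}ᶜ : Set R3) => g z)
        ((volume : Measure R3).comap (↑)) := by
      refine AEMeasurable.comp_measurable ?_ measurable_subtype_coe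
      rw [map_comap_subtype_coe h0]
      exact hg.restrict
    have MP := (volume : Measure R3).measurePreserving_homeomorphUnitSphereProd
    rw [hdim] at MP
    have MPe : MeasurePreserving ((homeomorphUnitSphereProd R3).toMeasurableEquiv)
        ((volume : Measure R3).comap (↑)) (ν.prod μr) := MP
    have := h2.comp_quasiMeasurePreserving
      (MeasurePreserving.symm _ MPe).quasiMeasurePreserving
    refine this.congr (ae_of_all _ fun p => ?_)
    simp only [Function.comp_apply, Homeomorph.toMeasurableEquiv_symm_coe,
      homeomorphUnitSphereProd_symm_apply_coe]
  have hfk : AEMeasurable (fun y => f y * k y) volume := hfaem.mul hkmeas.aemeasurable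
  have hfkp := hpull _ hfk
  have hfp := hpull _ hfaem
  have key1 : ∫⁻ y, f y * k y = ∫⁻ r : Ioi (0:ℝ), F r * Θ r ∂μr := by
    rw [transport (fun y => f y * k y), lintegral_prod_symm _ hfkp]
    refine lintegral_congr fun r => ?_
    calc ∫⁻ ω : sphere (0:R3) 1, f ((r:ℝ) • (ω:R3)) * k ((r:ℝ) • (ω:R3)) ∂ν
        = ∫⁻ ω : sphere (0:R3) 1, F r * k ((r:ℝ) • (ω:R3)) ∂ν :=
          lintegral_congr fun ω => by rw [hFval r ω]
      _ = F r * Θ r := lintegral_const_mul' _ _ (hFne r)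
  have key2 : ∫⁻ y, f y = (∫⁻ r : Ioi (0:ℝ), F r ∂μr) * ν univ := by
    rw [transport f, lintegral_prod_symm _ hfp]
    calc ∫⁻ r : Ioi (0:ℝ), (∫⁻ ω : sphere (0:R3) 1, f ((r:ℝ) • (ω:R3)) ∂ν) ∂μr
        = ∫⁻ r : Ioi (0:ℝ), F r * ν univ ∂μr := by
          refine lintegral_congr fun r => ?_
          rw [lintegral_congr fun ω => hFval r ω, lintegral_const]
      _ = _ := lintegral_mul_const' _ _ (measure_ne_top _ _)
  set W : Ioi (0:ℝ) → ℝ≥0∞ :=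
    fun r => ENNReal.ofReal (4*π) / ENNReal.ofReal (max ‖x‖ (r:ℝ)) with hW
  have hWmeas : Measurable W := by
    refine Measurable.div measurable_const ?_
    exact ((continuous_const.max continuous_subtype_val).measurable).ennreal_ofReal
  have hWlt : ∀ r, W r < ⊤ := fun r =>
    ENNReal.div_lt_top ENNReal.ofReal_ne_top
      (ne_of_gt (ENNReal.ofReal_pos.2 (lt_max_of_lt_left ha)))
  have hΘIio : ∀ τ : Ioi (0:ℝ), ∫⁻ r in Iio τ, Θ r ∂μr
      = ENNReal.ofReal (2*π) * ENNReal.ofReal (NewtonAux.nf ‖x‖ (τ:ℝ)) := by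
    intro τ
    have hτpos : (0:ℝ) < τ := mem_Ioi.1 τ.2
    calc ∫⁻ r in Iio τ, Θ r ∂μr = ∫⁻ r : Ioi (0:ℝ), (Iio τ).indicator Θ r ∂μr :=
          (lintegral_indicator measurableSet_Iio _).symm
      _ = ∫⁻ r : Ioi (0:ℝ), (∫⁻ ω : sphere (0:R3) 1,
            ((ball (0:R3) (τ:ℝ)).indicator k) ((r:ℝ) • (ω:R3)) ∂ν) ∂μr := by
          refine lintegral_congr fun r => ?_
          by_cases hr : r ∈ Iio τ
          · rw [Set.indicator_of_mem hr]
            refine lintegral_congr fun ω => ?_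
            rw [Set.indicator_of_mem]
            rw [mem_ball_zero_iff, NewtonAux.norm_smul_sphere (ω, r)]
            exact Subtype.coe_lt_coe.2 hr
          · rw [Set.indicator_of_notMem hr]
            symm
            rw [lintegral_congr fun ω : sphere (0:R3) 1 => Set.indicator_of_notMem
              (by
                rw [mem_ball_zero_iff, NewtonAux.norm_smul_sphere (ω, r)]
                exact fun hc => hr (Subtype.coe_lt_coe.1 hc)) k]
            exact lintegral_zero
      _ = ∫⁻ p : sphere (0:R3) 1 × Ioi (0:ℝ),
            ((ball (0:R3) (τ:ℝ)).indicator k) ((p.2:ℝ) • (p.1:R3)) ∂(ν.prod μr) :=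
          (lintegral_prod_symm _
            (((hkmeas.indicator measurableSet_ball).comp hsmulmeas).aemeasurable)).symm
      _ = ∫⁻ y, ((ball (0:R3) (τ:ℝ)).indicator k) y := (transport _).symm
      _ = ∫⁻ y in ball (0:R3) (τ:ℝ), k y := lintegral_indicator measurableSet_ball _
      _ = _ := NewtonAux.Vball x hx hτpos
  have hWIio : ∀ τ : Ioi (0:ℝ), ∫⁻ r in Iio τ, W r ∂μr
      = ENNReal.ofReal (2*π) * ENNReal.ofReal (NewtonAux.nf ‖x‖ (τ:ℝ)) := by
    intro τ
    have hτpos : (0:ℝ) < τ := mem_Ioi.1 τ.2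
    rw [hμr, Measure.volumeIoiPow, restrict_withDensity measurableSet_Iio,
      lintegral_withDensity_eq_lintegral_mul _
        ((measurable_subtype_coe.pow_const _).ennreal_ofReal) hWmeas]
    simp only [Pi.mul_apply]
    rw [show (fun r : Ioi (0:ℝ) => ENNReal.ofReal ((r:ℝ)^2) * W r)
        = fun r : Ioi (0:ℝ) => (fun s : ℝ => ENNReal.ofReal (s^2) *
            (ENNReal.ofReal (4*π) / ENNReal.ofReal (max ‖x‖ s))) (r:ℝ) from rfl]
    rw [setLIntegral_subtype measurableSet_Ioi (Iio τ)
      (fun s : ℝ => ENNReal.ofReal (s^2) *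
        (ENNReal.ofReal (4*π) / ENNReal.ofReal (max ‖x‖ s)))]
    rw [image_subtype_val_Ioi_Iio]
    exact NewtonAux.Wint ha hτpos
  have hMeq : μr.withDensity Θ = μr.withDensity W := by
    refine Measure.ext_of_generateFrom_of_iUnion (range Iio)
      (fun n : ℕ => Iio ⟨(n:ℝ)+1, mem_Ioi.2 (by positivity)⟩)
      (BorelSpace.measurable_eq.trans (borel_eq_generateFrom_Iio _))
      isPiSystem_Iio ?_ (fun n => mem_range_self _) ?_ ?_
    · rw [iUnion_eq_univ_iff]
      refine fun r => ⟨⌊(r:ℝ)⌋₊, ?_⟩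
      rw [mem_Iio, ← Subtype.coe_lt_coe]
      exact Nat.lt_floor_add_one (r:ℝ)
    · intro n
      rw [withDensity_apply _ measurableSet_Iio, hΘIio]
      exact ENNReal.mul_ne_top ENNReal.ofReal_ne_top ENNReal.ofReal_ne_top
    · rintro s ⟨τ, rfl⟩
      rw [withDensity_apply _ measurableSet_Iio, withDensity_apply _ measurableSet_Iio,
        hΘIio τ, hWIio τ]
  have hΘtopmeas : MeasurableSet {r : Ioi (0:ℝ) | Θ r = ⊤} :=
    hΘmeas (measurableSet_singleton ⊤)
  have hΘfin : ∀ᵐ r ∂μr, Θ r < ⊤ := by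
    have hcover : ∀ n : ℕ,
        μr ({r : Ioi (0:ℝ) | Θ r = ⊤} ∩ Iio ⟨(n:ℝ)+1, mem_Ioi.2 (by positivity)⟩) = 0 := by
      intro n
      set τ : Ioi (0:ℝ) := ⟨(n:ℝ)+1, mem_Ioi.2 (by positivity)⟩ with hτ
      have hfin : ∫⁻ r in Iio τ, Θ r ∂μr ≠ ⊤ := by
        rw [hΘIio τ]
        exact ENNReal.mul_ne_top ENNReal.ofReal_ne_top ENNReal.ofReal_ne_top
      have hae := ae_lt_top hΘmeas hfin
      rw [ae_iff] at hae
      have hset : {a : Ioi (0:ℝ) | ¬ Θ a < ⊤} = {r : Ioi (0:ℝ) | Θ r = ⊤} := by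
        ext r
        simp [not_lt, top_le_iff]
      rwa [hset, Measure.restrict_apply hΘtopmeas] at hae
    rw [ae_iff]
    refine measure_mono_null ?_ (measure_iUnion_null hcover)
    intro r hr
    simp only [mem_iUnion, mem_inter_iff]
    refine ⟨⌊(r:ℝ)⌋₊, ?_, ?_⟩
    · simpa [not_lt, top_le_iff] using hr
    · rw [mem_Iio, ← Subtype.coe_lt_coe]
      exact Nat.lt_floor_add_one (r:ℝ)
  have hconst_ne : ENNReal.ofReal (4*π) / ENNReal.ofReal ‖x‖ ≠ ⊤ :=
    (ENNReal.div_lt_top ENNReal.ofReal_ne_top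
      (ne_of_gt (ENNReal.ofReal_pos.2 ha))).ne
  have main_le : ∫⁻ y, f y * k y ≤
      (ENNReal.ofReal (4*π) / ENNReal.ofReal ‖x‖) * ∫⁻ r : Ioi (0:ℝ), F r ∂μr := by
    rw [key1]
    have h1 : ∫⁻ r : Ioi (0:ℝ), F r * Θ r ∂μr = ∫⁻ r : Ioi (0:ℝ), (Θ * F) r ∂μr :=
      lintegral_congr fun r => by simp only [Pi.mul_apply]; exact mul_comm _ _
    rw [h1, ← lintegral_withDensity_eq_lintegral_mul_non_measurable _ hΘmeas hΘfin,
      hMeq, lintegral_withDensity_eq_lintegral_mul_non_measurable _ hWmeas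
        (ae_of_all _ hWlt)]
    calc ∫⁻ r : Ioi (0:ℝ), (W * F) r ∂μr
        ≤ ∫⁻ r : Ioi (0:ℝ), (ENNReal.ofReal (4*π) / ENNReal.ofReal ‖x‖) * F r ∂μr := by
          refine lintegral_mono fun r => ?_
          simp only [Pi.mul_apply]
          exact mul_le_mul_left
            (ENNReal.div_le_div_left
              (ENNReal.ofReal_le_ofReal (le_max_left _ _)) _) _
      _ = (ENNReal.ofReal (4*π) / ENNReal.ofReal ‖x‖) * ∫⁻ r : Ioi (0:ℝ), F r ∂μr :=
          lintegral_const_mul' _ _ hconst_ne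
  have hRHS : ENNReal.ofReal ((∫ y, ρ y) / ‖x‖)
      = (∫⁻ r : Ioi (0:ℝ), F r ∂μr) * ENNReal.ofReal (4*π) / ENNReal.ofReal ‖x‖ := by
    rw [ENNReal.ofReal_div_of_pos ha,
      ofReal_integral_eq_lintegral_ofReal hint (ae_of_all _ hpos)]
    rw [show (∫⁻ y, ENNReal.ofReal (ρ y)) = ∫⁻ y, f y from rfl, key2]
    rw [show ν univ = ENNReal.ofReal (4*π) from NewtonAux.toSphere_univ_R3]
  rw [step1, hRHS]
  refine le_trans main_le (le_of_eq ?_)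
  rw [div_eq_mul_inv, div_eq_mul_inv]
  ring
end
end

section
/- Let C, a > 0 and let φ : ℝ³ → ℂ be measurable with |φ(x)| ≤ C e^{−a|x|} for all x ∈ ℝ³. Then there exists a constant K > 0, depending only on C and a, such that for every z ∈ ℝ³ with |z| ≥ 1: ∬_{ℝ³×ℝ³} |φ(x)|² |φ(y−z)|² / |x−y|² dx dy ≤ K / |z|². -/
open MeasureTheory Real

noncomputable section

open Metric Set
lemma edc_integrable_exp_neg_norm {b : ℝ} (hb : 0 < b) :
    Integrable (fun x : R3 => Real.exp (-(b * ‖x‖))) := by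
  have h4 : ((Module.finrank ℝ R3 : ℝ)) < 4 := by
    rw [finrank_euclideanSpace_fin]; norm_num
  set M : ℝ := max 1 (4 / b) with hM
  have hM1 : (1:ℝ) ≤ M := le_max_left _ _
  have hM2 : 4 / b ≤ M := le_max_right _ _
  have hMb : (4:ℝ) ≤ M * b := (div_le_iff₀ hb).mp hM2
  refine ((integrable_one_add_norm (E := R3) (μ := volume) h4).const_mul
    (M ^ 4)).mono' ?_ (Filter.Eventually.of_forall fun x => ?_)
  · exact ((measurable_norm.const_mul b).neg.exp).aestronglyMeasurable
  · rw [Real.norm_eq_abs, abs_of_nonneg (Real.exp_nonneg _)]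
    set t := ‖x‖ with ht
    have ht0 : 0 ≤ t := norm_nonneg x
    have h1 : 1 + t ≤ M * Real.exp (b * t / 4) := by
      have h2 : b * t / 4 + 1 ≤ Real.exp (b * t / 4) := Real.add_one_le_exp _
      nlinarith [mul_nonneg (sub_nonneg.mpr hM1) ht0]
    have h2 : (1 + t) ^ 4 ≤ M ^ 4 * Real.exp (b * t) := by
      have := pow_le_pow_left₀ (by positivity) h1 4
      calc (1 + t) ^ 4 ≤ (M * Real.exp (b * t / 4)) ^ 4 := this
        _ = M ^ 4 * Real.exp (b * t) := by
            have hx : ((4:ℕ):ℝ) * (b * t / 4) = b * t := by push_cast; ring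
            rw [mul_pow, ← Real.exp_nat_mul, hx]
    have hpos : (0:ℝ) < (1 + t) ^ 4 := by positivity
    have hrw : (1 + t) ^ (-(4:ℝ)) = ((1 + t) ^ (4:ℕ))⁻¹ := by
      rw [Real.rpow_neg (by positivity), ← Real.rpow_natCast]
      norm_num
    rw [hrw, Real.exp_neg, inv_eq_one_div, ← div_eq_mul_inv,
      div_le_div_iff₀ (Real.exp_pos _) hpos, one_mul]
    exact h2

lemma edc_lintegral_exp_lt_top {b : ℝ} (hb : 0 < b) :
    ∫⁻ x : R3, ENNReal.ofReal (Real.exp (-(b * ‖x‖))) < ⊤ :=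
  (edc_integrable_exp_neg_norm hb).lintegral_lt_top

lemma edc_lintegral_ball_lt_top :
    ∫⁻ u in ball (0:R3) 1, ENNReal.ofReal (1 / ‖u‖ ^ 2) < ⊤ := by
  have hnn : 0 ≤ᵐ[volume.restrict (ball (0:R3) 1)] fun u : R3 => 1 / ‖u‖ ^ 2 :=
    Filter.Eventually.of_forall fun u => by positivity
  have hm : Measurable fun u : R3 => 1 / ‖u‖ ^ 2 := by
    simp_rw [one_div]
    exact (measurable_norm.pow_const 2).inv
  rw [lintegral_eq_lintegral_meas_lt _ hnn hm.aemeasurable]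
  have hsplit : Set.Ioi (0:ℝ) = Set.Ioc 0 1 ∪ Set.Ioi 1 :=
    (Set.Ioc_union_Ioi_eq_Ioi zero_le_one).symm
  have hdisj : Disjoint (Set.Ioc (0:ℝ) 1) (Set.Ioi (1:ℝ)) := by
    apply Set.disjoint_left.mpr
    rintro t ⟨_, ht1⟩ ht2
    exact absurd (Set.mem_Ioi.mp ht2) (not_lt.mpr ht1)
  rw [hsplit, lintegral_union measurableSet_Ioi hdisj]
  have hfin : volume (ball (0:R3) 1) < ⊤ := measure_ball_lt_top
  apply ENNReal.add_lt_top.mpr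
  constructor
  · calc ∫⁻ t in Set.Ioc (0:ℝ) 1,
          (volume.restrict (ball (0:R3) 1)) {u : R3 | t < 1 / ‖u‖ ^ 2}
        ≤ ∫⁻ _ in Set.Ioc (0:ℝ) 1, volume (ball (0:R3) 1) := by
          apply lintegral_mono
          intro t
          exact (measure_mono (Set.subset_univ _)).trans_eq (Measure.restrict_apply_univ _)
      _ = volume (ball (0:R3) 1) * volume (Set.Ioc (0:ℝ) 1) := setLIntegral_const _ _
      _ < ⊤ := by
          rw [Real.volume_Ioc]
          exact ENNReal.mul_lt_top hfin (by simp)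
  · have hbd : ∀ t ∈ Set.Ioi (1:ℝ),
        (volume.restrict (ball (0:R3) 1)) {u : R3 | t < 1 / ‖u‖ ^ 2}
          ≤ ENNReal.ofReal (t ^ (-(3:ℝ)/2)) * volume (ball (0:R3) 1) := by
      intro t ht
      have ht1 : (1:ℝ) < t := ht
      have ht0 : (0:ℝ) < t := lt_trans zero_lt_one ht1
      set r : ℝ := t ^ (-(1:ℝ)/2) with hr
      have hr0 : 0 < r := Real.rpow_pos_of_pos ht0 _
      have hsub : {u : R3 | t < 1 / ‖u‖ ^ 2} ⊆ ball (0:R3) r := by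
        intro u hu
        have hu' : t < 1 / ‖u‖ ^ 2 := hu
        have hn0 : 0 < ‖u‖ ^ 2 := by
          by_contra h
          push_neg at h
          have : ‖u‖ ^ 2 = 0 := le_antisymm h (by positivity)
          rw [this] at hu'
          simp at hu'
          linarith
        have hlt : ‖u‖ ^ 2 < 1 / t := by
          rw [lt_div_iff₀ ht0]
          calc ‖u‖ ^ 2 * t < ‖u‖ ^ 2 * (1 / ‖u‖ ^ 2) := by
                exact mul_lt_mul_of_pos_left hu' hn0
            _ = 1 := mul_one_div_cancel hn0.ne'
        have hr2 : r ^ 2 = 1 / t := by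
          rw [hr, ← Real.rpow_natCast (t ^ (-(1:ℝ)/2)) 2, ← Real.rpow_mul ht0.le]
          push_cast
          rw [show (-(1:ℝ)/2 * 2) = -1 by ring, one_div]
          exact Real.rpow_neg_one t
        rw [mem_ball_zero_iff]
        refine lt_of_pow_lt_pow_left₀ 2 hr0.le ?_
        rw [hr2]; exact hlt
      have hmeas : MeasurableSet {u : R3 | t < 1 / ‖u‖ ^ 2} :=
        measurableSet_lt measurable_const hm
      calc (volume.restrict (ball (0:R3) 1)) {u : R3 | t < 1 / ‖u‖ ^ 2}
          ≤ volume {u : R3 | t < 1 / ‖u‖ ^ 2} := Measure.restrict_le_self _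
        _ ≤ volume (ball (0:R3) r) := measure_mono hsub
        _ = ENNReal.ofReal (r ^ Module.finrank ℝ R3) * volume (ball (0:R3) 1) :=
            Measure.addHaar_ball_of_pos _ _ hr0
        _ = ENNReal.ofReal (t ^ (-(3:ℝ)/2)) * volume (ball (0:R3) 1) := by
            congr 2
            rw [finrank_euclideanSpace_fin, hr, ← Real.rpow_natCast (t ^ (-(1:ℝ)/2)) 3,
              ← Real.rpow_mul ht0.le]
            norm_num
    calc ∫⁻ t in Set.Ioi (1:ℝ), (volume.restrict (ball (0:R3) 1)) {u : R3 | t < 1 / ‖u‖ ^ 2}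
        ≤ ∫⁻ t in Set.Ioi (1:ℝ), ENNReal.ofReal (t ^ (-(3:ℝ)/2)) * volume (ball (0:R3) 1) :=
          setLIntegral_mono (by fun_prop) hbd
      _ = (∫⁻ t in Set.Ioi (1:ℝ), ENNReal.ofReal (t ^ (-(3:ℝ)/2))) * volume (ball (0:R3) 1) :=
          lintegral_mul_const' _ _ (by simp [hfin.ne])
      _ < ⊤ := by
          exact ENNReal.mul_lt_top
            ((integrableOn_Ioi_rpow_of_lt (by norm_num) zero_lt_one).lintegral_lt_top) hfin

lemma edc_exp_neg_le {s : ℝ} (hs : 0 < s) : Real.exp (-s) ≤ 4 / s ^ 2 := by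
  have h2 : s / 2 + 1 ≤ Real.exp (s / 2) := Real.add_one_le_exp _
  have h3 : Real.exp s = Real.exp (s / 2) ^ 2 := by
    rw [sq, ← Real.exp_add]; congr 1; ring
  have h1 : s ^ 2 / 4 ≤ Real.exp s := by nlinarith [Real.exp_pos (s / 2)]
  have h4 : s ^ 2 ≤ 4 * Real.exp s := by linarith
  rw [Real.exp_neg, inv_eq_one_div, div_le_div_iff₀ (Real.exp_pos _) (by positivity), one_mul]
  linarith

lemma edc_pointwise (C a : ℝ) (hC : 0 < C) (ha : 0 < a) (φ : R3 → ℂ)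
    (hdecay : ∀ x, ‖φ x‖ ≤ C * Real.exp (-a * ‖x‖)) (z x y : R3) (hz : 1 ≤ ‖z‖) :
    ‖φ x‖ ^ 2 * ‖φ (y - z)‖ ^ 2 / ‖x - y‖ ^ 2 ≤
      4 * C ^ 4 / ‖z‖ ^ 2 * (Real.exp (-(2 * a * ‖x‖)) * Real.exp (-(2 * a * ‖y - z‖)))
      + C ^ 4 * Real.exp (-(a / 2 * ‖z‖)) *
        (Real.exp (-(a * ‖x‖)) * (Real.exp (-(a * ‖y - z‖)) * (1 / ‖x - y‖ ^ 2))) := by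
  have hz0 : (0:ℝ) < ‖z‖ := lt_of_lt_of_le zero_lt_one hz
  have hsq : ∀ v : R3, ‖φ v‖ ^ 2 ≤ C ^ 2 * Real.exp (-(2 * a * ‖v‖)) := by
    intro v
    have h1 : ‖φ v‖ ^ 2 ≤ (C * Real.exp (-a * ‖v‖)) ^ 2 :=
      pow_le_pow_left₀ (norm_nonneg _) (hdecay v) 2
    calc ‖φ v‖ ^ 2 ≤ (C * Real.exp (-a * ‖v‖)) ^ 2 := h1
      _ = C ^ 2 * Real.exp (-(2 * a * ‖v‖)) := by
          rw [mul_pow, sq (Real.exp _), ← Real.exp_add]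
          congr 2; ring
  have hP : ‖φ x‖ ^ 2 * ‖φ (y - z)‖ ^ 2
      ≤ C ^ 4 * (Real.exp (-(2 * a * ‖x‖)) * Real.exp (-(2 * a * ‖y - z‖))) := by
    calc ‖φ x‖ ^ 2 * ‖φ (y - z)‖ ^ 2
        ≤ (C ^ 2 * Real.exp (-(2 * a * ‖x‖))) * (C ^ 2 * Real.exp (-(2 * a * ‖y - z‖))) :=
          mul_le_mul (hsq x) (hsq (y - z)) (by positivity) (by positivity)
      _ = C ^ 4 * (Real.exp (-(2 * a * ‖x‖)) * Real.exp (-(2 * a * ‖y - z‖))) := by ring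
  rcases le_or_gt (‖z‖ / 2) ‖x - y‖ with h | h
  · -- far region
    have hq0 : (0:ℝ) < ‖x - y‖ := lt_of_lt_of_le (by positivity) h
    have hq : ‖z‖ ^ 2 / 4 ≤ ‖x - y‖ ^ 2 := by nlinarith
    have hinv : (‖x - y‖ ^ 2)⁻¹ ≤ 4 / ‖z‖ ^ 2 := by
      rw [div_eq_mul_inv]
      calc (‖x - y‖ ^ 2)⁻¹ ≤ (‖z‖ ^ 2 / 4)⁻¹ := by
            apply inv_anti₀ (by positivity) hq
        _ = 4 * (‖z‖ ^ 2)⁻¹ := by field_simp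
    have step : ‖φ x‖ ^ 2 * ‖φ (y - z)‖ ^ 2 / ‖x - y‖ ^ 2
        ≤ 4 * C ^ 4 / ‖z‖ ^ 2 * (Real.exp (-(2 * a * ‖x‖)) * Real.exp (-(2 * a * ‖y - z‖))) := by
      rw [div_eq_mul_inv]
      calc ‖φ x‖ ^ 2 * ‖φ (y - z)‖ ^ 2 * (‖x - y‖ ^ 2)⁻¹
          ≤ (C ^ 4 * (Real.exp (-(2 * a * ‖x‖)) * Real.exp (-(2 * a * ‖y - z‖)))) * (4 / ‖z‖ ^ 2) :=
            mul_le_mul hP hinv (by positivity) (by positivity)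
        _ = 4 * C ^ 4 / ‖z‖ ^ 2 * (Real.exp (-(2 * a * ‖x‖)) * Real.exp (-(2 * a * ‖y - z‖))) := by
            ring
    exact step.trans (le_add_of_nonneg_right (by positivity))
  · -- near region
    have hsum : ‖z‖ / 2 ≤ ‖x‖ + ‖y - z‖ := by
      have h1 : ‖x - (y - z)‖ ≤ ‖x‖ + ‖y - z‖ := norm_sub_le _ _
      have h2 : ‖z‖ - ‖x - y‖ ≤ ‖z + (x - y)‖ := by
        have := norm_sub_norm_le z (-(x - y))
        rw [norm_neg, sub_neg_eq_add] at this
        exact this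
      have h3 : x - (y - z) = z + (x - y) := by abel
      rw [h3] at h1
      linarith
    have hE : Real.exp (-(2 * a * ‖x‖)) * Real.exp (-(2 * a * ‖y - z‖))
        ≤ Real.exp (-(a / 2 * ‖z‖)) * (Real.exp (-(a * ‖x‖)) * Real.exp (-(a * ‖y - z‖))) := by
      rw [← Real.exp_add, ← Real.exp_add, ← Real.exp_add]
      apply Real.exp_le_exp.mpr
      have := mul_le_mul_of_nonneg_left hsum ha.le
      nlinarith [norm_nonneg x, norm_nonneg (y - z)]
    have step : ‖φ x‖ ^ 2 * ‖φ (y - z)‖ ^ 2 / ‖x - y‖ ^ 2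
        ≤ C ^ 4 * Real.exp (-(a / 2 * ‖z‖)) *
          (Real.exp (-(a * ‖x‖)) * (Real.exp (-(a * ‖y - z‖)) * (1 / ‖x - y‖ ^ 2))) := by
      rw [div_eq_mul_one_div]
      have hP2 : ‖φ x‖ ^ 2 * ‖φ (y - z)‖ ^ 2
          ≤ C ^ 4 * (Real.exp (-(a / 2 * ‖z‖)) *
            (Real.exp (-(a * ‖x‖)) * Real.exp (-(a * ‖y - z‖)))) :=
        hP.trans (by nlinarith [hE, pow_pos hC 4])
      calc ‖φ x‖ ^ 2 * ‖φ (y - z)‖ ^ 2 * (1 / ‖x - y‖ ^ 2)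
          ≤ (C ^ 4 * (Real.exp (-(a / 2 * ‖z‖)) *
              (Real.exp (-(a * ‖x‖)) * Real.exp (-(a * ‖y - z‖))))) * (1 / ‖x - y‖ ^ 2) :=
            mul_le_mul_of_nonneg_right hP2 (by positivity)
        _ = C ^ 4 * Real.exp (-(a / 2 * ‖z‖)) *
            (Real.exp (-(a * ‖x‖)) * (Real.exp (-(a * ‖y - z‖)) * (1 / ‖x - y‖ ^ 2))) := by ring
    exact step.trans (le_add_of_nonneg_left (by positivity))

lemma edc_inner (a : ℝ) (ha : 0 < a) (x v : R3) :
    ∫⁻ y : R3, ENNReal.ofReal (Real.exp (-(a * ‖y - v‖))) * ENNReal.ofReal (1 / ‖x - y‖ ^ 2)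
      ≤ (∫⁻ u in ball (0:R3) 1, ENNReal.ofReal (1 / ‖u‖ ^ 2))
        + ∫⁻ u : R3, ENNReal.ofReal (Real.exp (-(a * ‖u‖))) := by
  have hm : Measurable fun u : R3 => ENNReal.ofReal (1 / ‖u‖ ^ 2) := by
    apply Measurable.ennreal_ofReal
    simp_rw [one_div]
    exact (measurable_norm.pow_const 2).inv
  have hsub := lintegral_add_right_eq_self (μ := volume)
    (fun y : R3 => ENNReal.ofReal (Real.exp (-(a * ‖y - v‖))) * ENNReal.ofReal (1 / ‖x - y‖ ^ 2)) x
  rw [← hsub]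
  have hpt : ∀ u : R3,
      ENNReal.ofReal (Real.exp (-(a * ‖u + x - v‖))) * ENNReal.ofReal (1 / ‖x - (u + x)‖ ^ 2)
        ≤ (ball (0:R3) 1).indicator (fun w => ENNReal.ofReal (1 / ‖w‖ ^ 2)) u
          + ENNReal.ofReal (Real.exp (-(a * ‖u + (x - v)‖))) := by
    intro u
    have hxu : x - (u + x) = -u := by abel
    have harg : u + x - v = u + (x - v) := by abel
    rw [hxu, norm_neg, harg]
    rcases lt_or_ge ‖u‖ 1 with hu | hu
    · have h1 : ENNReal.ofReal (Real.exp (-(a * ‖u + (x - v)‖))) ≤ 1 := by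
        apply ENNReal.ofReal_le_one.mpr
        exact Real.exp_le_one_iff.mpr (neg_nonpos.mpr (by positivity))
      calc ENNReal.ofReal (Real.exp (-(a * ‖u + (x - v)‖))) * ENNReal.ofReal (1 / ‖u‖ ^ 2)
          ≤ 1 * ENNReal.ofReal (1 / ‖u‖ ^ 2) := mul_le_mul' h1 le_rfl
        _ = (ball (0:R3) 1).indicator (fun w => ENNReal.ofReal (1 / ‖w‖ ^ 2)) u := by
            rw [one_mul, Set.indicator_of_mem (mem_ball_zero_iff.mpr hu)]
        _ ≤ _ := le_self_add
    · have h2 : ENNReal.ofReal (1 / ‖u‖ ^ 2) ≤ 1 := by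
        apply ENNReal.ofReal_le_one.mpr
        rw [div_le_one (by nlinarith)]
        nlinarith
      calc ENNReal.ofReal (Real.exp (-(a * ‖u + (x - v)‖))) * ENNReal.ofReal (1 / ‖u‖ ^ 2)
          ≤ ENNReal.ofReal (Real.exp (-(a * ‖u + (x - v)‖))) * 1 := mul_le_mul' le_rfl h2
        _ = ENNReal.ofReal (Real.exp (-(a * ‖u + (x - v)‖))) := mul_one _
        _ ≤ _ := le_add_self
  calc ∫⁻ u : R3, ENNReal.ofReal (Real.exp (-(a * ‖u + x - v‖)))
          * ENNReal.ofReal (1 / ‖x - (u + x)‖ ^ 2)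
      ≤ ∫⁻ u : R3, ((ball (0:R3) 1).indicator (fun w => ENNReal.ofReal (1 / ‖w‖ ^ 2)) u
          + ENNReal.ofReal (Real.exp (-(a * ‖u + (x - v)‖)))) := lintegral_mono hpt
    _ = (∫⁻ u : R3, (ball (0:R3) 1).indicator (fun w => ENNReal.ofReal (1 / ‖w‖ ^ 2)) u)
          + ∫⁻ u : R3, ENNReal.ofReal (Real.exp (-(a * ‖u + (x - v)‖))) :=
        lintegral_add_left (hm.indicator measurableSet_ball) _
    _ = (∫⁻ u in ball (0:R3) 1, ENNReal.ofReal (1 / ‖u‖ ^ 2))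
          + ∫⁻ u : R3, ENNReal.ofReal (Real.exp (-(a * ‖u‖))) := by
        rw [lintegral_indicator measurableSet_ball,
          lintegral_add_right_eq_self (fun u : R3 => ENNReal.ofReal (Real.exp (-(a * ‖u‖)))) (x - v)]

/-- If `|φ(x)| ≤ C e^{−a|x|}`, then the cross term
`∬ |φ(x)|² |φ(y−z)|² / |x−y|² dx dy` decays like `1/|z|²` for `|z| ≥ 1`. -/
theorem exponential_decay_cross_term
    (C a : ℝ) (hC : 0 < C) (ha : 0 < a)
    (φ : R3 → ℂ) (hmeas : Measurable φ)
    (hdecay : ∀ x, ‖φ x‖ ≤ C * Real.exp (-a * ‖x‖)) :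
    ∃ K : ℝ, 0 < K ∧ ∀ z : R3, 1 ≤ ‖z‖ →
      ∫⁻ w : R3 × R3,
          ENNReal.ofReal (‖φ w.1‖ ^ 2 * ‖φ (w.2 - z)‖ ^ 2 / ‖w.1 - w.2‖ ^ 2)
        ≤ ENNReal.ofReal (K / ‖z‖ ^ 2) := by
  have ha2 : (0:ℝ) < 2 * a := by linarith
  have hEAfin : (∫⁻ x : R3, ENNReal.ofReal (Real.exp (-(2 * a * ‖x‖)))) ≠ ⊤ :=
    (edc_lintegral_exp_lt_top ha2).ne
  have hEBfin : (∫⁻ x : R3, ENNReal.ofReal (Real.exp (-(a * ‖x‖)))) ≠ ⊤ :=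
    (edc_lintegral_exp_lt_top ha).ne
  have hEDfin : (∫⁻ u in ball (0:R3) 1, ENNReal.ofReal (1 / ‖u‖ ^ 2)) ≠ ⊤ :=
    edc_lintegral_ball_lt_top.ne
  set A' : ℝ := (∫⁻ x : R3, ENNReal.ofReal (Real.exp (-(2 * a * ‖x‖)))).toReal with hA'def
  set B' : ℝ := (∫⁻ x : R3, ENNReal.ofReal (Real.exp (-(a * ‖x‖)))).toReal with hB'def
  set D' : ℝ := (∫⁻ u in ball (0:R3) 1, ENNReal.ofReal (1 / ‖u‖ ^ 2)).toReal with hD'def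
  have hA : (0:ℝ) ≤ A' := ENNReal.toReal_nonneg
  have hB : (0:ℝ) ≤ B' := ENNReal.toReal_nonneg
  have hD : (0:ℝ) ≤ D' := ENNReal.toReal_nonneg
  have hEA : (∫⁻ x : R3, ENNReal.ofReal (Real.exp (-(2 * a * ‖x‖)))) = ENNReal.ofReal A' :=
    (ENNReal.ofReal_toReal hEAfin).symm
  have hEB : (∫⁻ x : R3, ENNReal.ofReal (Real.exp (-(a * ‖x‖)))) = ENNReal.ofReal B' :=
    (ENNReal.ofReal_toReal hEBfin).symm
  have hED : (∫⁻ u in ball (0:R3) 1, ENNReal.ofReal (1 / ‖u‖ ^ 2)) = ENNReal.ofReal D' :=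
    (ENNReal.ofReal_toReal hEDfin).symm
  refine ⟨4 * C ^ 4 * (A' * A') + 16 / a ^ 2 * C ^ 4 * (B' * (D' + B')) + 1, ?_, fun z hz => ?_⟩
  · have h1 : (0:ℝ) ≤ 4 * C ^ 4 * (A' * A') := by positivity
    have h2 : (0:ℝ) ≤ 16 / a ^ 2 * C ^ 4 * (B' * (D' + B')) := by positivity
    linarith
  · have hz0 : (0:ℝ) < ‖z‖ := lt_of_lt_of_le zero_lt_one hz
    have hz2 : (0:ℝ) < ‖z‖ ^ 2 := by positivity
    -- measurability helpers
    have hf2 : Measurable fun v : R3 => ENNReal.ofReal (Real.exp (-(2 * a * ‖v‖))) :=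
      ((measurable_norm.const_mul (2 * a)).neg.exp).ennreal_ofReal
    have hf1 : Measurable fun v : R3 => ENNReal.ofReal (Real.exp (-(a * ‖v‖))) :=
      ((measurable_norm.const_mul a).neg.exp).ennreal_ofReal
    have hg : Measurable fun v : R3 => ENNReal.ofReal (1 / ‖v‖ ^ 2) := by
      apply Measurable.ennreal_ofReal
      simp_rw [one_div]
      exact (measurable_norm.pow_const 2).inv
    have hsub2 : Measurable fun w : R3 × R3 => w.2 - z := measurable_snd.sub measurable_const
    have hsub12 : Measurable fun w : R3 × R3 => w.1 - w.2 := measurable_fst.sub measurable_snd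
    have hsubz : Measurable fun y : R3 => y - z := measurable_id.sub measurable_const
    have hf2z : Measurable fun y : R3 => ENNReal.ofReal (Real.exp (-(2 * a * ‖y - z‖))) :=
      hf2.comp hsubz
    have hf1z : Measurable fun y : R3 => ENNReal.ofReal (Real.exp (-(a * ‖y - z‖))) :=
      hf1.comp hsubz
    have hT1m : Measurable fun w : R3 × R3 =>
        ENNReal.ofReal (Real.exp (-(2 * a * ‖w.1‖))) *
          ENNReal.ofReal (Real.exp (-(2 * a * ‖w.2 - z‖))) :=
      (hf2.comp measurable_fst).mul (hf2.comp hsub2)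
    have hGm : Measurable fun w : R3 × R3 =>
        ENNReal.ofReal (Real.exp (-(a * ‖w.1‖))) *
          (ENNReal.ofReal (Real.exp (-(a * ‖w.2 - z‖))) *
            ENNReal.ofReal (1 / ‖w.1 - w.2‖ ^ 2)) :=
      (hf1.comp measurable_fst).mul ((hf1.comp hsub2).mul (hg.comp hsub12))
    calc ∫⁻ w : R3 × R3,
            ENNReal.ofReal (‖φ w.1‖ ^ 2 * ‖φ (w.2 - z)‖ ^ 2 / ‖w.1 - w.2‖ ^ 2)
        ≤ ∫⁻ w : R3 × R3,
            (ENNReal.ofReal (4 * C ^ 4 / ‖z‖ ^ 2) *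
              (ENNReal.ofReal (Real.exp (-(2 * a * ‖w.1‖))) *
                ENNReal.ofReal (Real.exp (-(2 * a * ‖w.2 - z‖))))
            + ENNReal.ofReal (C ^ 4 * Real.exp (-(a / 2 * ‖z‖))) *
              (ENNReal.ofReal (Real.exp (-(a * ‖w.1‖))) *
                (ENNReal.ofReal (Real.exp (-(a * ‖w.2 - z‖))) *
                  ENNReal.ofReal (1 / ‖w.1 - w.2‖ ^ 2)))) := by
          apply lintegral_mono
          intro w
          have hreal := edc_pointwise C a hC ha φ hdecay z w.1 w.2 hz
          calc ENNReal.ofReal (‖φ w.1‖ ^ 2 * ‖φ (w.2 - z)‖ ^ 2 / ‖w.1 - w.2‖ ^ 2)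
              ≤ ENNReal.ofReal
                  (4 * C ^ 4 / ‖z‖ ^ 2 *
                      (Real.exp (-(2 * a * ‖w.1‖)) * Real.exp (-(2 * a * ‖w.2 - z‖)))
                    + C ^ 4 * Real.exp (-(a / 2 * ‖z‖)) *
                      (Real.exp (-(a * ‖w.1‖)) *
                        (Real.exp (-(a * ‖w.2 - z‖)) * (1 / ‖w.1 - w.2‖ ^ 2)))) :=
                ENNReal.ofReal_le_ofReal hreal
            _ = _ := by
                rw [ENNReal.ofReal_add (by positivity) (by positivity),
                  ENNReal.ofReal_mul (by positivity), ENNReal.ofReal_mul (by positivity),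
                  ENNReal.ofReal_mul (by positivity), ENNReal.ofReal_mul (by positivity),
                  ENNReal.ofReal_mul (by positivity), ENNReal.ofReal_mul (by positivity)]
      _ = (∫⁻ w : R3 × R3, ENNReal.ofReal (4 * C ^ 4 / ‖z‖ ^ 2) *
              (ENNReal.ofReal (Real.exp (-(2 * a * ‖w.1‖))) *
                ENNReal.ofReal (Real.exp (-(2 * a * ‖w.2 - z‖)))))
          + ∫⁻ w : R3 × R3, ENNReal.ofReal (C ^ 4 * Real.exp (-(a / 2 * ‖z‖))) *
              (ENNReal.ofReal (Real.exp (-(a * ‖w.1‖))) *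
                (ENNReal.ofReal (Real.exp (-(a * ‖w.2 - z‖))) *
                  ENNReal.ofReal (1 / ‖w.1 - w.2‖ ^ 2))) :=
          lintegral_add_left (measurable_const.mul hT1m) _
      _ ≤ ENNReal.ofReal (4 * C ^ 4 / ‖z‖ ^ 2) * (ENNReal.ofReal A' * ENNReal.ofReal A')
          + ENNReal.ofReal (C ^ 4 * Real.exp (-(a / 2 * ‖z‖))) *
              (ENNReal.ofReal B' * (ENNReal.ofReal D' + ENNReal.ofReal B')) := by
          apply add_le_add
          · rw [lintegral_const_mul _ hT1m]
            apply mul_le_mul' le_rfl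
            rw [Measure.volume_eq_prod R3 R3,
              lintegral_prod_mul hf2.aemeasurable hf2z.aemeasurable,
              lintegral_sub_right_eq_self
                (fun v : R3 => ENNReal.ofReal (Real.exp (-(2 * a * ‖v‖)))) z]
            rw [hEA]
          · rw [lintegral_const_mul _ hGm]
            apply mul_le_mul' le_rfl
            rw [Measure.volume_eq_prod R3 R3, lintegral_prod _ hGm.aemeasurable]
            have hinner : ∀ x : R3,
                (∫⁻ y : R3, ENNReal.ofReal (Real.exp (-(a * ‖x‖))) *
                  (ENNReal.ofReal (Real.exp (-(a * ‖y - z‖))) *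
                    ENNReal.ofReal (1 / ‖x - y‖ ^ 2)))
                ≤ ENNReal.ofReal (Real.exp (-(a * ‖x‖))) *
                    (ENNReal.ofReal D' + ENNReal.ofReal B') := by
              intro x
              have hky : Measurable fun y : R3 =>
                  ENNReal.ofReal (Real.exp (-(a * ‖y - z‖))) * ENNReal.ofReal (1 / ‖x - y‖ ^ 2) :=
                hf1z.mul (hg.comp (measurable_const.sub measurable_id))
              rw [lintegral_const_mul _ hky]
              apply mul_le_mul' le_rfl
              have := edc_inner a ha x z
              rw [hED, hEB] at this
              exact this
            calc ∫⁻ x : R3, ∫⁻ y : R3, ENNReal.ofReal (Real.exp (-(a * ‖x‖))) *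
                  (ENNReal.ofReal (Real.exp (-(a * ‖y - z‖))) *
                    ENNReal.ofReal (1 / ‖x - y‖ ^ 2))
                ≤ ∫⁻ x : R3, ENNReal.ofReal (Real.exp (-(a * ‖x‖))) *
                    (ENNReal.ofReal D' + ENNReal.ofReal B') :=
                  lintegral_mono hinner
              _ = ENNReal.ofReal B' * (ENNReal.ofReal D' + ENNReal.ofReal B') := by
                  rw [lintegral_mul_const _ hf1, hEB]
      _ = ENNReal.ofReal (4 * C ^ 4 / ‖z‖ ^ 2 * (A' * A'))
          + ENNReal.ofReal (C ^ 4 * Real.exp (-(a / 2 * ‖z‖)) * (B' * (D' + B'))) := by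
          rw [← ENNReal.ofReal_mul hA, ← ENNReal.ofReal_add hD hB,
            ← ENNReal.ofReal_mul hB, ← ENNReal.ofReal_mul (by positivity),
            ← ENNReal.ofReal_mul (by positivity)]
      _ ≤ ENNReal.ofReal
            ((4 * C ^ 4 * (A' * A') + 16 / a ^ 2 * C ^ 4 * (B' * (D' + B')) + 1) / ‖z‖ ^ 2) := by
          rw [← ENNReal.ofReal_add (by positivity) (by positivity)]
          apply ENNReal.ofReal_le_ofReal
          have hc2 : Real.exp (-(a / 2 * ‖z‖)) ≤ 16 / (a ^ 2 * ‖z‖ ^ 2) := by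
            have h := edc_exp_neg_le (s := a / 2 * ‖z‖) (by positivity)
            calc Real.exp (-(a / 2 * ‖z‖)) ≤ 4 / (a / 2 * ‖z‖) ^ 2 := h
              _ = 16 / (a ^ 2 * ‖z‖ ^ 2) := by
                  rw [show (a / 2 * ‖z‖) ^ 2 = a ^ 2 * ‖z‖ ^ 2 / 4 by ring,
                    div_div_eq_mul_div]
                  norm_num
          have h2 : C ^ 4 * Real.exp (-(a / 2 * ‖z‖)) * (B' * (D' + B'))
              ≤ 16 / a ^ 2 * C ^ 4 * (B' * (D' + B')) / ‖z‖ ^ 2 := by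
            calc C ^ 4 * Real.exp (-(a / 2 * ‖z‖)) * (B' * (D' + B'))
                ≤ C ^ 4 * (16 / (a ^ 2 * ‖z‖ ^ 2)) * (B' * (D' + B')) := by
                  apply mul_le_mul_of_nonneg_right _ (by positivity)
                  exact mul_le_mul_of_nonneg_left hc2 (by positivity)
              _ = 16 / a ^ 2 * C ^ 4 * (B' * (D' + B')) / ‖z‖ ^ 2 := by
                  rw [← div_div]
                  ring
          have h1 : 4 * C ^ 4 / ‖z‖ ^ 2 * (A' * A')
              = 4 * C ^ 4 * (A' * A') / ‖z‖ ^ 2 := by ring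
          have h3 : (4 * C ^ 4 * (A' * A') + 16 / a ^ 2 * C ^ 4 * (B' * (D' + B'))) / ‖z‖ ^ 2
              ≤ (4 * C ^ 4 * (A' * A') + 16 / a ^ 2 * C ^ 4 * (B' * (D' + B')) + 1) / ‖z‖ ^ 2 :=
            (div_le_div_iff_of_pos_right hz2).mpr (by linarith)
          rw [add_div] at h3
          linarith
end
end
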